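/- arXiv:1409.2340 — 6 statements merged into one kernel-verified Lean document; each statement's English description precedes it below -/
import Mathlib

section
/- Let c₀>0, α∈[0,1] and β=√(1−α²). Let m,n,b:ℝ→ℝ³ be a solution of the self-similar profile system. Define M(s,t)=m(s/√t) for s∈ℝ, t>0. Then for every t>0 and every s∈ℝ, the time derivative ∂ₜM(s,t) of t'↦M(s,t') equals β·(M(s,t) × ∂ₛₛM(s,t)) − α·(M(s,t) × (M(s,t) × ∂ₛₛM(s,t))), where × denotes the cross product in ℝ³ and ∂ₛₛM(s,t) is the second derivative of s'↦M(s',t) at s; i.e., M is a solution of the one-dimensional Landau–Lifshitz–Gilbert equation for t>0. -/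
open Real Filter

/-- The Serret–Frenet system with curvature `c` and torsion `τ` for
functions `m n b : ℝ → ℝ³`. -/
def SerretFrenet (c τ : ℝ → ℝ) (m n b : ℝ → Fin 3 → ℝ) : Prop :=
  ∀ s : ℝ,
    HasDerivAt m (c s • n s) s ∧
    HasDerivAt n ((-c s) • m s + τ s • b s) s ∧
    HasDerivAt b ((-τ s) • n s) s

/-- The self-similar profile system: Serret–Frenet with curvature
`c₀ e^{-αs²/4}`, torsion `βs/2` where `β = √(1-α²)`, and the canonical
initial conditions. -/
def ProfileSystem (c₀ α : ℝ) (m n b : ℝ → Fin 3 → ℝ) : Prop :=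
  SerretFrenet (fun s => c₀ * Real.exp (-α * s ^ 2 / 4))
    (fun s => Real.sqrt (1 - α ^ 2) * s / 2) m n b ∧
  m 0 = ![1, 0, 0] ∧ n 0 = ![0, 1, 0] ∧ b 0 = ![0, 0, 1]

private lemma sqterm {f g h k l : ℝ → ℝ} {f' g' h' k' l' : ℝ} {s : ℝ}
    (hf : HasDerivAt f f' s) (hg : HasDerivAt g g' s) (hh : HasDerivAt h h' s)
    (hk : HasDerivAt k k' s) (hl : HasDerivAt l l' s) :
    HasDerivAt (fun x => (f x * g x - h x * k x - l x) ^ 2)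
      (2 * (f s * g s - h s * k s - l s) *
        (f' * g s + f s * g' - (h' * k s + h s * k') - l')) s := by
  have := (((hf.mul hg).sub (hh.mul hk)).sub hl).pow 2
  refine this.congr_deriv ?_
  push_cast
  simp only [Pi.sub_apply, Pi.mul_apply]
  ring

private lemma frame_lemma (c τ : ℝ → ℝ) (m n b : ℝ → Fin 3 → ℝ)
    (hSF : SerretFrenet c τ m n b)
    (hm0 : m 0 = ![1, 0, 0]) (hn0 : n 0 = ![0, 1, 0]) (hb0 : b 0 = ![0, 0, 1]) :
    ∀ x : ℝ, crossProduct (m x) (n x) = b x ∧ crossProduct (m x) (b x) = -(n x) ∧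
      crossProduct (n x) (b x) = m x := by
  have hm : ∀ x i, HasDerivAt (fun y => m y i) (c x * n x i) x :=
    fun x i => hasDerivAt_pi.1 (hSF x).1 i
  have hn : ∀ x i, HasDerivAt (fun y => n y i) (-c x * m x i + τ x * b x i) x :=
    fun x i => hasDerivAt_pi.1 (hSF x).2.1 i
  have hb : ∀ x i, HasDerivAt (fun y => b y i) (-τ x * n x i) x :=
    fun x i => hasDerivAt_pi.1 (hSF x).2.2 i
  set E : ℝ → ℝ := fun x =>
    (m x 1 * n x 2 - m x 2 * n x 1 - b x 0) ^ 2 +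
    (m x 2 * n x 0 - m x 0 * n x 2 - b x 1) ^ 2 +
    (m x 0 * n x 1 - m x 1 * n x 0 - b x 2) ^ 2 +
    (m x 1 * b x 2 - m x 2 * b x 1 - -n x 0) ^ 2 +
    (m x 2 * b x 0 - m x 0 * b x 2 - -n x 1) ^ 2 +
    (m x 0 * b x 1 - m x 1 * b x 0 - -n x 2) ^ 2 +
    (n x 1 * b x 2 - n x 2 * b x 1 - m x 0) ^ 2 +
    (n x 2 * b x 0 - n x 0 * b x 2 - m x 1) ^ 2 +
    (n x 0 * b x 1 - n x 1 * b x 0 - m x 2) ^ 2 with hE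
  have hdE : ∀ x, HasDerivAt E 0 x := by
    intro x
    have T1 := sqterm (hm x 1) (hn x 2) (hm x 2) (hn x 1) (hb x 0)
    have T2 := sqterm (hm x 2) (hn x 0) (hm x 0) (hn x 2) (hb x 1)
    have T3 := sqterm (hm x 0) (hn x 1) (hm x 1) (hn x 0) (hb x 2)
    have T4 := sqterm (hm x 1) (hb x 2) (hm x 2) (hb x 1) (hn x 0).neg
    have T5 := sqterm (hm x 2) (hb x 0) (hm x 0) (hb x 2) (hn x 1).neg
    have T6 := sqterm (hm x 0) (hb x 1) (hm x 1) (hb x 0) (hn x 2).neg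
    have T7 := sqterm (hn x 1) (hb x 2) (hn x 2) (hb x 1) (hm x 0)
    have T8 := sqterm (hn x 2) (hb x 0) (hn x 0) (hb x 2) (hm x 1)
    have T9 := sqterm (hn x 0) (hb x 1) (hn x 1) (hb x 0) (hm x 2)
    have T := ((((((((T1.add T2).add T3).add T4).add T5).add T6).add T7).add T8).add T9)
    refine T.congr_deriv ?_
    simp only [Pi.neg_apply]
    ring
  have hE0 : E 0 = 0 := by
    simp only [hE, hm0, hn0, hb0]
    norm_num
    simp
  have hEzero : ∀ x, E x = 0 := by
    intro x
    have := is_const_of_deriv_eq_zero (f := E)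
      (fun y => (hdE y).differentiableAt) (fun y => (hdE y).deriv) x 0
    rw [this, hE0]
  intro x
  have hx := hEzero x
  simp only [hE] at hx
  have key : ∀ a : ℝ, a ^ 2 = 0 → a = 0 := fun a ha =>
    (pow_eq_zero_iff two_ne_zero).1 ha
  have n1 := sq_nonneg (m x 1 * n x 2 - m x 2 * n x 1 - b x 0)
  have n2 := sq_nonneg (m x 2 * n x 0 - m x 0 * n x 2 - b x 1)
  have n3 := sq_nonneg (m x 0 * n x 1 - m x 1 * n x 0 - b x 2)
  have n4 := sq_nonneg (m x 1 * b x 2 - m x 2 * b x 1 - -n x 0)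
  have n5 := sq_nonneg (m x 2 * b x 0 - m x 0 * b x 2 - -n x 1)
  have n6 := sq_nonneg (m x 0 * b x 1 - m x 1 * b x 0 - -n x 2)
  have n7 := sq_nonneg (n x 1 * b x 2 - n x 2 * b x 1 - m x 0)
  have n8 := sq_nonneg (n x 2 * b x 0 - n x 0 * b x 2 - m x 1)
  have n9 := sq_nonneg (n x 0 * b x 1 - n x 1 * b x 0 - m x 2)
  have e1 := key _ (by linarith : (m x 1 * n x 2 - m x 2 * n x 1 - b x 0) ^ 2 = 0)
  have e2 := key _ (by linarith : (m x 2 * n x 0 - m x 0 * n x 2 - b x 1) ^ 2 = 0)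
  have e3 := key _ (by linarith : (m x 0 * n x 1 - m x 1 * n x 0 - b x 2) ^ 2 = 0)
  have e4 := key _ (by linarith : (m x 1 * b x 2 - m x 2 * b x 1 - -n x 0) ^ 2 = 0)
  have e5 := key _ (by linarith : (m x 2 * b x 0 - m x 0 * b x 2 - -n x 1) ^ 2 = 0)
  have e6 := key _ (by linarith : (m x 0 * b x 1 - m x 1 * b x 0 - -n x 2) ^ 2 = 0)
  have e7 := key _ (by linarith : (n x 1 * b x 2 - n x 2 * b x 1 - m x 0) ^ 2 = 0)
  have e8 := key _ (by linarith : (n x 2 * b x 0 - n x 0 * b x 2 - m x 1) ^ 2 = 0)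
  have e9 := key _ (by linarith : (n x 0 * b x 1 - n x 1 * b x 0 - m x 2) ^ 2 = 0)
  refine ⟨?_, ?_, ?_⟩ <;> funext i <;> fin_cases i <;>
    simp [cross_apply] <;> linarith

/-- If `m,n,b` solve the self-similar profile system, then
`M(s,t) := m(s/√t)` solves the one-dimensional Landau–Lifshitz–Gilbert equation
`∂ₜM = β (M × ∂ₛₛM) − α (M × (M × ∂ₛₛM))` for `t > 0`. -/
theorem llg_self_similar_solution (c₀ α : ℝ) (hc₀ : 0 < c₀)
    (hα : α ∈ Set.Icc (0 : ℝ) 1)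
    (m n b : ℝ → Fin 3 → ℝ) (h : ProfileSystem c₀ α m n b)
    (M : ℝ → ℝ → Fin 3 → ℝ) (hM : ∀ s t : ℝ, M s t = m (s / Real.sqrt t)) :
    ∀ t : ℝ, 0 < t → ∀ s : ℝ,
      HasDerivAt (fun t' : ℝ => M s t')
        (Real.sqrt (1 - α ^ 2) •
            crossProduct (M s t) (deriv (deriv (fun s' : ℝ => M s' t)) s)
          - α • crossProduct (M s t)
              (crossProduct (M s t)
                (deriv (deriv (fun s' : ℝ => M s' t)) s))) t := by
  obtain ⟨hSF, hm0, hn0, hb0⟩ := h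
  have hβ2 : Real.sqrt (1 - α ^ 2) ^ 2 = 1 - α ^ 2 :=
    Real.sq_sqrt (by nlinarith [hα.1, hα.2])
  have frame := frame_lemma _ _ m n b hSF hm0 hn0 hb0
  have hm : ∀ x : ℝ, HasDerivAt m ((c₀ * Real.exp (-α * x ^ 2 / 4)) • n x) x :=
    fun x => (hSF x).1
  have hn : ∀ x : ℝ, HasDerivAt n
      ((-(c₀ * Real.exp (-α * x ^ 2 / 4))) • m x +
        (Real.sqrt (1 - α ^ 2) * x / 2) • b x) x := fun x => (hSF x).2.1
  -- derivative of the curvature function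
  have hcf : ∀ x : ℝ, HasDerivAt (fun y : ℝ => c₀ * Real.exp (-α * y ^ 2 / 4))
      (-(α * x / 2) * (c₀ * Real.exp (-α * x ^ 2 / 4))) x := by
    intro x
    have h1 : HasDerivAt (fun y : ℝ => -α * y ^ 2 / 4) (-α * (2 * x) / 4) x := by
      have h0 := ((hasDerivAt_pow 2 x).const_mul (-α)).div_const 4
      refine h0.congr_deriv ?_
      push_cast
      ring
    have h2 := (h1.exp).const_mul c₀
    refine h2.congr_deriv ?_
    push_cast
    ring
  intro t ht s
  have hr : (0 : ℝ) < Real.sqrt t := Real.sqrt_pos.2 ht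
  set r := Real.sqrt t with hrdef
  have hr2 : r ^ 2 = t := Real.sq_sqrt ht.le
  set σ := s / r with hσ
  -- inner function derivative
  have hι : ∀ x : ℝ, HasDerivAt (fun y : ℝ => y / r) (1 / r) x := by
    intro x
    simpa using (hasDerivAt_id x).div_const r
  -- first spatial derivative
  have hg : ∀ x : ℝ, HasDerivAt (fun y : ℝ => m (y / r))
      ((1 / r) • ((c₀ * Real.exp (-α * (x / r) ^ 2 / 4)) • n (x / r))) x := by
    intro x
    exact HasDerivAt.scomp_of_eq (x := x) (h := fun y : ℝ => y / r) (hm (x / r)) (hι x) rfl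
  have hfun : (fun s' : ℝ => M s' t) = fun s' : ℝ => m (s' / r) := by
    funext s'
    rw [hM s' t]
  have hd1 : deriv (fun s' : ℝ => M s' t) =
      fun x : ℝ => (1 / r) • ((c₀ * Real.exp (-α * (x / r) ^ 2 / 4)) • n (x / r)) := by
    funext x
    rw [hfun]
    exact (hg x).deriv
  -- second spatial derivative
  have hA : HasDerivAt (fun x : ℝ => c₀ * Real.exp (-α * (x / r) ^ 2 / 4))
      ((-(α * σ / 2) * (c₀ * Real.exp (-α * σ ^ 2 / 4))) * (1 / r)) s :=
    HasDerivAt.comp_of_eq (x := s) (h := fun y : ℝ => y / r) (hcf σ) (hι s) rfl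
  have hB : HasDerivAt (fun x : ℝ => n (x / r))
      ((1 / r) • ((-(c₀ * Real.exp (-α * σ ^ 2 / 4))) • m σ +
        (Real.sqrt (1 - α ^ 2) * σ / 2) • b σ)) s :=
    HasDerivAt.scomp_of_eq (x := s) (h := fun y : ℝ => y / r) (hn σ) (hι s) rfl
  have hG : HasDerivAt
      (fun x : ℝ => (1 / r) • ((c₀ * Real.exp (-α * (x / r) ^ 2 / 4)) • n (x / r)))
      ((1 / r) • ((c₀ * Real.exp (-α * σ ^ 2 / 4)) •
          ((1 / r) • ((-(c₀ * Real.exp (-α * σ ^ 2 / 4))) • m σ +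
            (Real.sqrt (1 - α ^ 2) * σ / 2) • b σ)) +
        ((-(α * σ / 2) * (c₀ * Real.exp (-α * σ ^ 2 / 4))) * (1 / r)) • n σ)) s :=
    (hA.smul hB).const_smul (1 / r)
  have hd2 : deriv (deriv (fun s' : ℝ => M s' t)) s =
      (1 / r) • ((c₀ * Real.exp (-α * σ ^ 2 / 4)) •
          ((1 / r) • ((-(c₀ * Real.exp (-α * σ ^ 2 / 4))) • m σ +
            (Real.sqrt (1 - α ^ 2) * σ / 2) • b σ)) +
        ((-(α * σ / 2) * (c₀ * Real.exp (-α * σ ^ 2 / 4))) * (1 / r)) • n σ) := by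
    rw [hd1]
    exact hG.deriv
  -- time derivative
  have hj : HasDerivAt (fun t' : ℝ => s / Real.sqrt t')
      ((0 * r - s * (1 / (2 * r))) / r ^ 2) t :=
    (hasDerivAt_const t s).div (Real.hasDerivAt_sqrt ht.ne') hr.ne'
  have hT : HasDerivAt (fun t' : ℝ => m (s / Real.sqrt t'))
      (((0 * r - s * (1 / (2 * r))) / r ^ 2) •
        ((c₀ * Real.exp (-α * σ ^ 2 / 4)) • n σ)) t :=
    HasDerivAt.scomp_of_eq (x := t) (h := fun t' : ℝ => s / Real.sqrt t') (hm σ) hj rfl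
  have hfun2 : (fun t' : ℝ => M s t') = fun t' : ℝ => m (s / Real.sqrt t') := by
    funext t'
    rw [hM s t']
  rw [hfun2, hd2, hM s t, ← hrdef, ← hσ]
  convert hT using 1
  obtain ⟨f1, f2, f3⟩ := frame σ
  simp only [map_add, map_smul, map_neg, map_sub, LinearMap.map_smul₂, cross_self,
    f1, f2, smul_neg, smul_zero, neg_neg, smul_add, map_zero]
  match_scalars
  · rw [hσ]
    linear_combination (-(s * (c₀ * Real.exp (-α * (s / r) ^ 2 / 4))) / (2 * r ^ 3)) * hβ2
  · ring
end

section
/- Let c₀>0, α∈[0,1] and β=√(1−α²). Let m,n,b:ℝ→ℝ³ be a solution of the self-similar profile system. Then there exists a unit vector A⁺=(A₁⁺,A₂⁺,A₃⁺)∈ℝ³ (|A⁺|=1) such that m(s)→A⁺ as s→+∞ and m(s)→A⁻:=(A₁⁺,−A₂⁺,−A₃⁺) as s→−∞. Consequently, setting M(s,t)=m(s/√t) for t>0, for every fixed s>0 one has M(s,t)→A⁺ as t→0⁺, and for every fixed s<0 one has M(s,t)→A⁻ as t→0⁺. -/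
open Real Filter

section Auxiliary

open Set MeasureTheory

/-- Dot product on `Fin 3 → ℝ`, written out explicitly. -/
noncomputable def dot3 (x y : Fin 3 → ℝ) : ℝ := x 0 * y 0 + x 1 * y 1 + x 2 * y 2

/-- The reflection `(v₀, v₁, v₂) ↦ (v₀, -v₁, -v₂)`. -/
noncomputable def Rf (v : Fin 3 → ℝ) : Fin 3 → ℝ := ![v 0, -v 1, -v 2]

lemma hasDerivAt_dot3 {f g : ℝ → Fin 3 → ℝ} {f' g' : Fin 3 → ℝ} {s : ℝ}
    (hf : HasDerivAt f f' s) (hg : HasDerivAt g g' s) :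
    HasDerivAt (fun t => dot3 (f t) (g t)) (dot3 f' (g s) + dot3 (f s) g') s := by
  have hfi := fun i => hasDerivAt_pi.1 hf i
  have hgi := fun i => hasDerivAt_pi.1 hg i
  have := (((hfi 0).mul (hgi 0)).add ((hfi 1).mul (hgi 1))).add ((hfi 2).mul (hgi 2))
  convert this using 1
  · rfl
  · rfl
  · funext t; simp [dot3]
  · simp [dot3]; ring

lemma abs_mul_le' {a x K M : ℝ} (ha : |a| ≤ K) (hx : |x| ≤ M) : |a * x| ≤ K * M := by
  rw [abs_mul]
  exact mul_le_mul ha hx (abs_nonneg x) ((abs_nonneg a).trans ha)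

/-- Grönwall-type uniqueness: a function whose derivative is controlled linearly by
itself and that vanishes at `0` vanishes identically. -/
lemma gronwall_zero {E : Type*} [NormedAddCommGroup E] [NormedSpace ℝ E]
    (L : ℝ) (f f' : ℝ → E) (hf : ∀ s, HasDerivAt f (f' s) s)
    (h0 : f 0 = 0)
    (hb : ∀ s, ‖f' s‖ ≤ (L + L * |s|) * ‖f s‖) : ∀ s, f s = 0 := by
  suffices H : ∀ (g g' : ℝ → E), (∀ s, HasDerivAt g (g' s) s) → g 0 = 0 →
      (∀ s, ‖g' s‖ ≤ (L + L * |s|) * ‖g s‖) → ∀ s, 0 ≤ s → g s = 0 by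
    intro s
    rcases le_total 0 s with hs | hs
    · exact H f f' hf h0 hb s hs
    · have hg : ∀ t, HasDerivAt (fun t => f (-t)) ((-1 : ℝ) • f' (-t)) t := fun t =>
        (hf (-t)).scomp t (hasDerivAt_neg t)
      have := H (fun t => f (-t)) (fun t => (-1 : ℝ) • f' (-t)) hg (by simpa using h0)
        (fun t => by simpa [abs_neg] using hb (-t)) (-s) (by linarith)
      simpa using this
  intro g g' hg hg0 hgb s hs
  have key := norm_le_gronwallBound_of_norm_deriv_right_le
    (f := g) (f' := g') (δ := 0) (K := |L| + |L| * s) (ε := 0) (a := 0) (b := s)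
    (fun t _ => (hg t).continuousAt.continuousWithinAt)
    (fun t _ => (hg t).hasDerivWithinAt)
    (by simp [hg0])
    (fun t ht => by
      have h1 : ‖g' t‖ ≤ (L + L * |t|) * ‖g t‖ := hgb t
      have h2 : L + L * |t| ≤ |L| + |L| * s := by
        have : |t| ≤ s := by rw [abs_of_nonneg ht.1]; exact ht.2.le
        have hL := le_abs_self L
        nlinarith [abs_nonneg t, abs_nonneg L, le_abs_self (L * |t|), abs_mul L |t|]
      calc ‖g' t‖ ≤ (L + L * |t|) * ‖g t‖ := h1
        _ ≤ (|L| + |L| * s) * ‖g t‖ + 0 := by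
            rw [add_zero]; exact mul_le_mul_of_nonneg_right h2 (norm_nonneg _))
    s (right_mem_Icc.2 hs)
  rw [gronwallBound_ε0_δ0] at key
  exact norm_le_zero_iff.mp key

lemma bound_aux (cs ts C S N x0 x1 x2 x3 x4 x5 : ℝ)
    (hC : 0 ≤ C) (hS : 0 ≤ S) (hN : 0 ≤ N)
    (hc : |cs| ≤ C) (ht : |ts| ≤ S)
    (h0 : |x0| ≤ N) (h1 : |x1| ≤ N) (h2 : |x2| ≤ N)
    (h3 : |x3| ≤ N) (h4 : |x4| ≤ N) (h5 : |x5| ≤ N) :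
    ‖((2*cs*x3, -2*cs*x3 + 2*ts*x4, -2*ts*x4, cs*(x1 - x0) + ts*x5,
        -cs*x5 + ts*(x2 - x1), cs*x4 - ts*x3) : ℝ × ℝ × ℝ × ℝ × ℝ × ℝ)‖
      ≤ ((2*C+2) + (2*C+2)*S) * N := by
  have hCSN : 0 ≤ C * S * N := by positivity
  have hSN : 0 ≤ S * N := by positivity
  have hCN : 0 ≤ C * N := by positivity
  have kc3 := abs_le.1 (abs_mul_le' hc h3)
  have kc4 := abs_le.1 (abs_mul_le' hc h4)
  have kc5 := abs_le.1 (abs_mul_le' hc h5)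
  have kt3 := abs_le.1 (abs_mul_le' ht h3)
  have kt4 := abs_le.1 (abs_mul_le' ht h4)
  have kt5 := abs_le.1 (abs_mul_le' ht h5)
  have kc10 := abs_le.1 (abs_mul_le' hc (abs_sub _ _ |>.trans (by linarith) : |x1 - x0| ≤ 2*N))
  have kt21 := abs_le.1 (abs_mul_le' ht (abs_sub _ _ |>.trans (by linarith) : |x2 - x1| ≤ 2*N))
  simp only [norm_prod_le_iff, Real.norm_eq_abs]
  refine ⟨?_, ?_, ?_, ?_, ?_, ?_⟩ <;> rw [abs_le] <;> constructor
  · linarith [hN, hCN, hSN, hCSN, kc3.1, kc3.2]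
  · linarith [hN, hCN, hSN, hCSN, kc3.1, kc3.2]
  · linarith [hN, hCN, hSN, hCSN, kc3.1, kc3.2, kt4.1, kt4.2]
  · linarith [hN, hCN, hSN, hCSN, kc3.1, kc3.2, kt4.1, kt4.2]
  · linarith [hN, hCN, hSN, hCSN, kt4.1, kt4.2]
  · linarith [hN, hCN, hSN, hCSN, kt4.1, kt4.2]
  · linarith [hN, hCN, hSN, hCSN, kc10.1, kc10.2, kt5.1, kt5.2]
  · linarith [hN, hCN, hSN, hCSN, kc10.1, kc10.2, kt5.1, kt5.2]
  · linarith [hN, hCN, hSN, hCSN, kc5.1, kc5.2, kt21.1, kt21.2]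
  · linarith [hN, hCN, hSN, hCSN, kc5.1, kc5.2, kt21.1, kt21.2]
  · linarith [hN, hCN, hSN, hCSN, kc4.1, kc4.2, kt3.1, kt3.2]
  · linarith [hN, hCN, hSN, hCSN, kc4.1, kc4.2, kt3.1, kt3.2]

end Auxiliary

section Frame

open Set MeasureTheory

/-- The frame stays orthonormal (we only record the norms). -/
lemma gram {c τ : ℝ → ℝ} {C : ℝ} (hC : 0 ≤ C) (hc : ∀ s, |c s| ≤ C)
    (hτ : ∀ s, |τ s| ≤ |s|) {m n b : ℝ → Fin 3 → ℝ}
    (hSF : SerretFrenet c τ m n b)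
    (hm0 : m 0 = ![1, 0, 0]) (hn0 : n 0 = ![0, 1, 0]) (hb0 : b 0 = ![0, 0, 1]) :
    ∀ s, dot3 (m s) (m s) = 1 ∧ dot3 (n s) (n s) = 1 ∧ dot3 (b s) (b s) = 1 := by
  set G : ℝ → ℝ × ℝ × ℝ × ℝ × ℝ × ℝ := fun s =>
    (dot3 (m s) (m s) - 1, dot3 (n s) (n s) - 1, dot3 (b s) (b s) - 1,
     dot3 (m s) (n s), dot3 (n s) (b s), dot3 (m s) (b s)) with hGdef
  set G' : ℝ → ℝ × ℝ × ℝ × ℝ × ℝ × ℝ := fun s =>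
    (2*(c s)*(dot3 (m s) (n s)),
     -2*(c s)*(dot3 (m s) (n s)) + 2*(τ s)*(dot3 (n s) (b s)),
     -2*(τ s)*(dot3 (n s) (b s)),
     (c s)*((dot3 (n s) (n s) - 1) - (dot3 (m s) (m s) - 1)) + (τ s)*(dot3 (m s) (b s)),
     -(c s)*(dot3 (m s) (b s)) + (τ s)*((dot3 (b s) (b s) - 1) - (dot3 (n s) (n s) - 1)),
     (c s)*(dot3 (n s) (b s)) - (τ s)*(dot3 (m s) (n s))) with hG'def
  have hderiv : ∀ s, HasDerivAt G (G' s) s := by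
    intro s
    obtain ⟨hm, hn, hb⟩ := hSF s
    have d1 : HasDerivAt (fun x => dot3 (m x) (m x) - 1) (2*(c s)*(dot3 (m s) (n s))) s :=
      ((hasDerivAt_dot3 hm hm).sub_const 1).congr_deriv (by simp [dot3]; ring)
    have d2 : HasDerivAt (fun x => dot3 (n x) (n x) - 1)
        (-2*(c s)*(dot3 (m s) (n s)) + 2*(τ s)*(dot3 (n s) (b s))) s :=
      ((hasDerivAt_dot3 hn hn).sub_const 1).congr_deriv (by simp [dot3]; ring)
    have d3 : HasDerivAt (fun x => dot3 (b x) (b x) - 1) (-2*(τ s)*(dot3 (n s) (b s))) s :=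
      ((hasDerivAt_dot3 hb hb).sub_const 1).congr_deriv (by simp [dot3]; ring)
    have d4 : HasDerivAt (fun x => dot3 (m x) (n x))
        ((c s)*((dot3 (n s) (n s) - 1) - (dot3 (m s) (m s) - 1)) + (τ s)*(dot3 (m s) (b s))) s :=
      (hasDerivAt_dot3 hm hn).congr_deriv (by simp [dot3]; ring)
    have d5 : HasDerivAt (fun x => dot3 (n x) (b x))
        (-(c s)*(dot3 (m s) (b s)) + (τ s)*((dot3 (b s) (b s) - 1) - (dot3 (n s) (n s) - 1))) s :=
      (hasDerivAt_dot3 hn hb).congr_deriv (by simp [dot3]; ring)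
    have d6 : HasDerivAt (fun x => dot3 (m x) (b x))
        ((c s)*(dot3 (n s) (b s)) - (τ s)*(dot3 (m s) (n s))) s :=
      (hasDerivAt_dot3 hm hb).congr_deriv (by simp [dot3]; ring)
    exact d1.prodMk (d2.prodMk (d3.prodMk (d4.prodMk (d5.prodMk d6))))
  have h0 : G 0 = 0 := by
    rw [hGdef]
    simp only [hm0, hn0, hb0, dot3]
    norm_num [Prod.ext_iff]
    simp
  have hbound : ∀ s, ‖G' s‖ ≤ ((2*C+2) + (2*C+2) * |s|) * ‖G s‖ := by
    intro s
    exact bound_aux (c s) (τ s) C |s| ‖G s‖ _ _ _ _ _ _ hC (abs_nonneg s) (norm_nonneg _)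
      (hc s) (hτ s)
      (norm_fst_le (G s))
      ((norm_fst_le (G s).2).trans (norm_snd_le (G s)))
      ((norm_fst_le (G s).2.2).trans ((norm_snd_le (G s).2).trans (norm_snd_le (G s))))
      ((norm_fst_le (G s).2.2.2).trans ((norm_snd_le (G s).2.2).trans
        ((norm_snd_le (G s).2).trans (norm_snd_le (G s)))))
      ((norm_fst_le (G s).2.2.2.2).trans ((norm_snd_le (G s).2.2.2).trans
        ((norm_snd_le (G s).2.2).trans ((norm_snd_le (G s).2).trans (norm_snd_le (G s))))))
      ((norm_snd_le (G s).2.2.2.2).trans ((norm_snd_le (G s).2.2.2).trans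
        ((norm_snd_le (G s).2.2).trans ((norm_snd_le (G s).2).trans (norm_snd_le (G s))))))
  have hzero := gronwall_zero (2*C+2) G G' hderiv h0 hbound
  intro s
  have h := hzero s
  rw [hGdef] at h
  simp only [Prod.ext_iff, Prod.fst_zero, Prod.snd_zero] at h
  refine ⟨by linarith [h.1], by linarith [h.2.1], by linarith [h.2.2.1]⟩

lemma comp_le_one {v : Fin 3 → ℝ} (h : dot3 v v = 1) : ∀ i, |v i| ≤ 1 := by
  intro i
  have h0 := sq_nonneg (v 0)
  have h1 := sq_nonneg (v 1)
  have h2 := sq_nonneg (v 2)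
  unfold dot3 at h
  have hvi : v i = v 0 ∨ v i = v 1 ∨ v i = v 2 := by
    fin_cases i
    · exact Or.inl rfl
    · exact Or.inr (Or.inl rfl)
    · exact Or.inr (Or.inr rfl)
  rcases hvi with hv | hv | hv <;> rw [hv, abs_le] <;> constructor <;> nlinarith

lemma hasDerivAt_comp_neg {E : Type*} [NormedAddCommGroup E] [NormedSpace ℝ E]
    {f : ℝ → E} {f' : E} {s : ℝ} (hf : HasDerivAt f f' (-s)) :
    HasDerivAt (fun t => f (-t)) (-f') s := by
  simpa [Function.comp_def] using hf.scomp s (hasDerivAt_neg s)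

lemma hasDerivAt_Rf {g : ℝ → Fin 3 → ℝ} {g' : Fin 3 → ℝ} {s : ℝ} (hg : HasDerivAt g g' s) :
    HasDerivAt (fun t => Rf (g t)) (Rf g') s := by
  have h0 := hasDerivAt_pi.1 hg 0
  have h1 := (hasDerivAt_pi.1 hg 1).neg
  have h2 := (hasDerivAt_pi.1 hg 2).neg
  refine hasDerivAt_pi.2 fun i => ?_
  fin_cases i
  · exact h0
  · exact h1
  · exact h2

/-- Symmetry: the reflected and reversed solution coincides with the solution, from
uniqueness (Grönwall). -/
lemma symmetry {c τ : ℝ → ℝ} (hce : ∀ s, c (-s) = c s) (hτo : ∀ s, τ (-s) = -τ s)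
    {C : ℝ} (hC : 0 ≤ C) (hc : ∀ s, |c s| ≤ C) (hτ : ∀ s, |τ s| ≤ |s|)
    {m n b : ℝ → Fin 3 → ℝ} (hSF : SerretFrenet c τ m n b)
    (hm0 : m 0 = ![1, 0, 0]) (hn0 : n 0 = ![0, 1, 0]) (hb0 : b 0 = ![0, 0, 1]) :
    ∀ s, m (-s) = Rf (m s) := by
  set D : ℝ → (Fin 3 → ℝ) × (Fin 3 → ℝ) × (Fin 3 → ℝ) := fun s =>
    (m s - Rf (m (-s)), n s + Rf (n (-s)), b s + Rf (b (-s))) with hDdef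
  set D' : ℝ → (Fin 3 → ℝ) × (Fin 3 → ℝ) × (Fin 3 → ℝ) := fun s =>
    (c s • (n s + Rf (n (-s))),
     (-c s) • (m s - Rf (m (-s))) + τ s • (b s + Rf (b (-s))),
     (-τ s) • (n s + Rf (n (-s)))) with hD'def
  have hderiv : ∀ s, HasDerivAt D (D' s) s := by
    intro s
    obtain ⟨hm, hn, hb⟩ := hSF s
    have hmneg := hasDerivAt_Rf (hasDerivAt_comp_neg (hSF (-s)).1)
    have hnneg := hasDerivAt_Rf (hasDerivAt_comp_neg (hSF (-s)).2.1)
    have hbneg := hasDerivAt_Rf (hasDerivAt_comp_neg (hSF (-s)).2.2)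
    have d1 : HasDerivAt (fun t => m t - Rf (m (-t))) (c s • (n s + Rf (n (-s)))) s := by
      refine (hm.sub hmneg).congr_deriv ?_
      funext i
      fin_cases i <;> simp [Rf, hce s, hτo s, Matrix.vecHead, Matrix.vecTail, Function.comp] <;> ring
    have d2 : HasDerivAt (fun t => n t + Rf (n (-t)))
        ((-c s) • (m s - Rf (m (-s))) + τ s • (b s + Rf (b (-s)))) s := by
      refine (hn.add hnneg).congr_deriv ?_
      funext i
      fin_cases i <;> simp [Rf, hce s, hτo s, Matrix.vecHead, Matrix.vecTail, Function.comp] <;> ring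
    have d3 : HasDerivAt (fun t => b t + Rf (b (-t))) ((-τ s) • (n s + Rf (n (-s)))) s := by
      refine (hb.add hbneg).congr_deriv ?_
      funext i
      fin_cases i <;> simp [Rf, hce s, hτo s, Matrix.vecHead, Matrix.vecTail, Function.comp] <;> ring
    exact d1.prodMk (d2.prodMk d3)
  have h0 : D 0 = 0 := by
    rw [hDdef]
    simp only [neg_zero, hm0, hn0, hb0, Prod.ext_iff]
    refine ⟨?_, ?_, ?_⟩ <;> (funext i; fin_cases i <;> simp [Rf])
  have hbound : ∀ s, ‖D' s‖ ≤ ((C+1) + (C+1) * |s|) * ‖D s‖ := by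
    intro s
    have hd1 : ‖(D s).1‖ ≤ ‖D s‖ := norm_fst_le _
    have hd2 : ‖(D s).2.1‖ ≤ ‖D s‖ := (norm_fst_le _).trans (norm_snd_le _)
    have hd3 : ‖(D s).2.2‖ ≤ ‖D s‖ := (norm_snd_le _).trans (norm_snd_le _)
    have hN : (0:ℝ) ≤ ‖D s‖ := norm_nonneg _
    have hcs := hc s
    have hts := hτ s
    have habs : (0:ℝ) ≤ |s| := abs_nonneg s
    have p1 : (0:ℝ) ≤ |s| * ‖D s‖ := by positivity
    have p2 : (0:ℝ) ≤ C * (|s| * ‖D s‖) := by positivity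
    have p3 : (0:ℝ) ≤ C * ‖D s‖ := by positivity
    rw [hD'def]
    refine norm_prod_le_iff.2 ⟨?_, norm_prod_le_iff.2 ⟨?_, ?_⟩⟩
    · rw [norm_smul, Real.norm_eq_abs]
      calc |c s| * ‖n s + Rf (n (-s))‖ ≤ C * ‖D s‖ := by
            apply mul_le_mul hcs hd2 (norm_nonneg _) hC
        _ ≤ ((C+1) + (C+1) * |s|) * ‖D s‖ := by nlinarith [p1, p2, p3, hN]
    · calc ‖(-c s) • (m s - Rf (m (-s))) + τ s • (b s + Rf (b (-s)))‖
          ≤ ‖(-c s) • (m s - Rf (m (-s)))‖ + ‖τ s • (b s + Rf (b (-s)))‖ := norm_add_le _ _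
        _ = |c s| * ‖(D s).1‖ + |τ s| * ‖(D s).2.2‖ := by
            rw [norm_smul, norm_smul, Real.norm_eq_abs, Real.norm_eq_abs, abs_neg]
        _ ≤ C * ‖D s‖ + |s| * ‖D s‖ := by
            have := mul_le_mul hcs hd1 (norm_nonneg _) hC
            have := mul_le_mul hts hd3 (norm_nonneg _) habs
            linarith
        _ ≤ ((C+1) + (C+1) * |s|) * ‖D s‖ := by nlinarith [p1, p2, p3, hN]
    · rw [norm_smul, Real.norm_eq_abs, abs_neg]
      calc |τ s| * ‖n s + Rf (n (-s))‖ ≤ |s| * ‖D s‖ := by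
            apply mul_le_mul hts hd2 (norm_nonneg _) habs
        _ ≤ ((C+1) + (C+1) * |s|) * ‖D s‖ := by nlinarith [p1, p2, p3, hN]
  have hzero := gronwall_zero (C+1) D D' hderiv h0 hbound
  intro s
  calc m (-s) = Rf (m (-(-s))) := by
        have h1' : m (-s) - Rf (m (-(-s))) = 0 := congrArg Prod.fst (hzero (-s))
        rwa [sub_eq_zero] at h1'
    _ = Rf (m s) := by rw [neg_neg]

/-- Convergence of a component of `m` as `s → ∞`, case `α > 0`. -/
lemma tendsto_atTop_pos {c τ : ℝ → ℝ} {c₀ α : ℝ} (hc₀ : 0 < c₀) (hαpos : 0 < α)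
    (hcdef : c = fun s => c₀ * Real.exp (-α * s ^ 2 / 4))
    {m n b : ℝ → Fin 3 → ℝ} (hSF : SerretFrenet c τ m n b)
    (hn1 : ∀ s i, |n s i| ≤ 1) (i : Fin 3) :
    ∃ a, Tendsto (fun s => m s i) atTop (nhds a) := by
  have hncont : Continuous fun t => n t i :=
    continuous_iff_continuousAt.2 fun t => (hasDerivAt_pi.1 (hSF t).2.1 i).continuousAt
  have hccont : Continuous c := by
    rw [hcdef]; continuity
  have hfcont : Continuous fun t => c t * n t i := hccont.mul hncont
  have hg : Integrable (fun t : ℝ => c₀ * Real.exp (-(α/4) * t ^ 2)) :=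
    (integrable_exp_neg_mul_sq (by positivity)).const_mul c₀
  have hbound : ∀ t, ‖c t * n t i‖ ≤ c₀ * Real.exp (-(α/4) * t ^ 2) := by
    intro t
    rw [Real.norm_eq_abs, abs_mul, hcdef]
    have h1 : |c₀ * Real.exp (-α * t ^ 2 / 4)| = c₀ * Real.exp (-α * t ^ 2 / 4) :=
      abs_of_pos (by positivity)
    rw [h1]
    have h2 : -α * t ^ 2 / 4 = -(α/4) * t ^ 2 := by ring
    rw [h2]
    calc c₀ * Real.exp (-(α/4) * t ^ 2) * |n t i|
        ≤ c₀ * Real.exp (-(α/4) * t ^ 2) * 1 := by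
          apply mul_le_mul_of_nonneg_left (hn1 t i) (by positivity)
      _ = c₀ * Real.exp (-(α/4) * t ^ 2) := mul_one _
  have hint : Integrable (fun t => c t * n t i) :=
    hg.mono' hfcont.aestronglyMeasurable (Eventually.of_forall hbound)
  have htend := MeasureTheory.intervalIntegral_tendsto_integral_Ioi 0
    hint.integrableOn tendsto_id
  have hftc : ∀ S : ℝ, ∫ t in (0:ℝ)..S, c t * n t i = m S i - m 0 i := by
    intro S
    apply intervalIntegral.integral_eq_sub_of_hasDerivAt
    · intro t _
      simpa using hasDerivAt_pi.1 (hSF t).1 i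
    · exact (hfcont.intervalIntegrable _ _)
  refine ⟨m 0 i + ∫ t in Ioi (0:ℝ), c t * n t i, ?_⟩
  have := tendsto_const_nhds (α := ℝ) (f := atTop (α := ℝ)) (x := m 0 i) |>.add htend
  refine this.congr fun S => ?_
  simp only [id_eq]
  rw [hftc S]; ring

/-- Convergence of a component of `m` as `s → ∞`, case `α = 0`, via integration by parts. -/
lemma tendsto_atTop_zero {c₀ : ℝ} (hc₀ : 0 < c₀)
    {m n b : ℝ → Fin 3 → ℝ}
    (hSF : SerretFrenet (fun _ => c₀) (fun x => x / 2) m n b)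
    (hb1 : ∀ s i, |b s i| ≤ 1) (i : Fin 3) :
    ∃ a, Tendsto (fun s => m s i) atTop (nhds a) := by
  have hncont : Continuous fun t => n t i :=
    continuous_iff_continuousAt.2 fun t => (hasDerivAt_pi.1 (hSF t).2.1 i).continuousAt
  have hbcont : Continuous fun t => b t i :=
    continuous_iff_continuousAt.2 fun t => (hasDerivAt_pi.1 (hSF t).2.2 i).continuousAt
  have hmderiv : ∀ t : ℝ, HasDerivAt (fun s => m s i) (c₀ * n t i) t := fun t => by
    simpa using hasDerivAt_pi.1 (hSF t).1 i
  have hbderiv : ∀ t : ℝ, HasDerivAt (fun s => b s i) (-(t/2) * n t i) t := fun t => by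
    simpa using hasDerivAt_pi.1 (hSF t).2.2 i
  have hftc : ∀ S : ℝ, ∫ t in (1:ℝ)..S, c₀ * n t i = m S i - m 1 i := by
    intro S
    apply intervalIntegral.integral_eq_sub_of_hasDerivAt (fun t _ => hmderiv t)
    exact ((continuous_const.mul hncont).intervalIntegrable _ _)
  have hibp : ∀ S : ℝ, 1 ≤ S →
      ∫ t in (1:ℝ)..S, c₀ * n t i
        = (-2*c₀/S) * b S i - (-2*c₀/1) * b 1 i - ∫ t in (1:ℝ)..S, (2*c₀/t^2) * b t i := by
    intro S hS
    have huIcc : Set.uIcc (1:ℝ) S = Icc 1 S := uIcc_of_le hS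
    have hne : ∀ x ∈ Set.uIcc (1:ℝ) S, x ≠ 0 := by
      intro x hx
      rw [huIcc] at hx
      exact ne_of_gt (lt_of_lt_of_le one_pos hx.1)
    have hu : ∀ x ∈ Set.uIcc (1:ℝ) S, HasDerivAt (fun t => -2*c₀/t) (2*c₀/x^2) x := by
      intro x hx
      exact ((hasDerivAt_inv (hne x hx)).const_mul (-2*c₀)).congr_deriv (by
        field_simp)
    have hu'cont : ContinuousOn (fun x : ℝ => 2*c₀/x^2) (Set.uIcc (1:ℝ) S) := by
      apply ContinuousOn.div continuousOn_const (continuous_pow 2).continuousOn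
      exact fun x hx => pow_ne_zero 2 (hne x hx)
    have hibp0 := intervalIntegral.integral_mul_deriv_eq_deriv_mul
      (u := fun t => -2*c₀/t) (v := fun t => b t i)
      (u' := fun x => 2*c₀/x^2) (v' := fun x => -(x/2) * n x i)
      hu (fun x _ => hbderiv x)
      (hu'cont.intervalIntegrable)
      (((continuous_id.div_const 2).neg.mul hncont).intervalIntegrable _ _)
    have hcongr : ∫ t in (1:ℝ)..S, c₀ * n t i
        = ∫ t in (1:ℝ)..S, (-2*c₀/t) * (-(t/2) * n t i) := by
      apply intervalIntegral.integral_congr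
      intro x hx
      have hx0 := hne x hx
      field_simp
    rw [hcongr, hibp0]
  have T1 : Tendsto (fun S : ℝ => (-2*c₀/S) * b S i) atTop (nhds 0) := by
    have hg0 : Tendsto (fun S : ℝ => 2*c₀/S) atTop (nhds 0) :=
      tendsto_const_nhds.div_atTop tendsto_id
    apply squeeze_zero_norm' _ hg0
    · filter_upwards [eventually_gt_atTop (0:ℝ)] with S hS
      rw [Real.norm_eq_abs, abs_mul]
      calc |(-2*c₀/S)| * |b S i| ≤ |(-2*c₀/S)| * 1 :=
            mul_le_mul_of_nonneg_left (hb1 S i) (abs_nonneg _)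
        _ = |(-2)*c₀| / S := by rw [mul_one, abs_div, abs_of_pos hS]
        _ = 2*c₀/S := by rw [abs_mul]; norm_num [abs_of_pos hc₀]
  have hint2 : IntegrableOn (fun t : ℝ => (2*c₀/t^2) * b t i) (Ioi 1) := by
    have hg : IntegrableOn (fun t : ℝ => (2*c₀) * t ^ (-2:ℝ)) (Ioi 1) :=
      (integrableOn_Ioi_rpow_of_lt (by norm_num) one_pos).const_mul (2*c₀)
    apply hg.mono'
    · apply ContinuousOn.aestronglyMeasurable _ measurableSet_Ioi
      apply ContinuousOn.mul _ hbcont.continuousOn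
      apply ContinuousOn.div continuousOn_const (continuous_pow 2).continuousOn
      intro x hx
      exact pow_ne_zero 2 (ne_of_gt (lt_trans one_pos hx))
    · rw [ae_restrict_iff' measurableSet_Ioi]
      apply Eventually.of_forall
      intro t ht
      have ht0 : (0:ℝ) < t := lt_trans one_pos ht
      have hrw : t ^ (-2:ℝ) = (t^2)⁻¹ := by
        rw [Real.rpow_neg ht0.le]
        congr 1
        rw [← Real.rpow_natCast t 2]
        norm_num
      rw [Real.norm_eq_abs, abs_mul, hrw]
      calc |2*c₀/t^2| * |b t i| ≤ |2*c₀/t^2| * 1 :=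
            mul_le_mul_of_nonneg_left (hb1 t i) (abs_nonneg _)
        _ = 2*c₀ * (t^2)⁻¹ := by
            rw [mul_one, abs_of_pos (by positivity)]; ring
  have T2 := MeasureTheory.intervalIntegral_tendsto_integral_Ioi 1 hint2 tendsto_id
  refine ⟨m 1 i + (0 - (-2*c₀/1) * b 1 i - ∫ t in Ioi (1:ℝ), (2*c₀/t^2) * b t i), ?_⟩
  have Tfull : Tendsto (fun S : ℝ => m 1 i + ((-2*c₀/S) * b S i - (-2*c₀/1) * b 1 i
      - ∫ t in (1:ℝ)..S, (2*c₀/t^2) * b t i)) atTop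
      (nhds (m 1 i + (0 - (-2*c₀/1) * b 1 i - ∫ t in Ioi (1:ℝ), (2*c₀/t^2) * b t i))) := by
    apply tendsto_const_nhds.add
    apply Tendsto.sub _ (by simpa using T2)
    exact T1.sub tendsto_const_nhds
  refine Tfull.congr' ?_
  filter_upwards [eventually_ge_atTop (1:ℝ)] with S hS
  have := hftc S
  rw [hibp S hS] at this
  linarith [this]

end Frame

/-- The profile `m` converges to a unit vector `A⁺` as
`s → +∞` and to `A⁻ = (A₁⁺, −A₂⁺, −A₃⁺)` as `s → −∞`; consequently the
self-similar solution `M(s,t) = m(s/√t)` converges pointwise, as `t → 0⁺`,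
to `A⁺` for `s > 0` and to `A⁻` for `s < 0`. -/
theorem profile_limits (c₀ α : ℝ) (hc₀ : 0 < c₀)
    (hα : α ∈ Set.Icc (0 : ℝ) 1)
    (m n b : ℝ → Fin 3 → ℝ) (h : ProfileSystem c₀ α m n b) :
    ∃ A : Fin 3 → ℝ,
      (A 0) ^ 2 + (A 1) ^ 2 + (A 2) ^ 2 = 1 ∧
      Tendsto m atTop (nhds A) ∧
      Tendsto m atBot (nhds ![A 0, -A 1, -A 2]) ∧
      (∀ s : ℝ, 0 < s →
        Tendsto (fun t : ℝ => m (s / Real.sqrt t))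
          (nhdsWithin 0 (Set.Ioi 0)) (nhds A)) ∧
      (∀ s : ℝ, s < 0 →
        Tendsto (fun t : ℝ => m (s / Real.sqrt t))
          (nhdsWithin 0 (Set.Ioi 0)) (nhds ![A 0, -A 1, -A 2])) := by
  obtain ⟨hSF, hm0, hn0, hb0⟩ := h
  set c : ℝ → ℝ := fun s => c₀ * Real.exp (-α * s ^ 2 / 4) with hcdef
  set τ : ℝ → ℝ := fun s => Real.sqrt (1 - α ^ 2) * s / 2 with hτdef
  obtain ⟨hα0, hα1⟩ := hα
  -- pointwise bounds on the coefficients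
  have hc : ∀ s, |c s| ≤ c₀ := by
    intro s
    rw [hcdef]
    have hexp : Real.exp (-α * s ^ 2 / 4) ≤ 1 := by
      rw [Real.exp_le_one_iff]
      nlinarith [sq_nonneg s]
    rw [abs_of_pos (by positivity)]
    nlinarith
  have hτ : ∀ s, |τ s| ≤ |s| := by
    intro s
    rw [hτdef]
    have hsq : Real.sqrt (1 - α ^ 2) ≤ 1 := by
      have h1 : (1 : ℝ) - α ^ 2 ≤ 1 := by nlinarith [sq_nonneg α]
      have := Real.sqrt_le_sqrt h1
      simpa [Real.sqrt_one] using this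
    have hsq0 : 0 ≤ Real.sqrt (1 - α ^ 2) := Real.sqrt_nonneg _
    rw [abs_div, abs_mul, abs_of_nonneg hsq0]
    have h1 : Real.sqrt (1 - α ^ 2) * |s| ≤ 1 * |s| :=
      mul_le_mul_of_nonneg_right hsq (abs_nonneg s)
    calc Real.sqrt (1 - α ^ 2) * |s| / |(2:ℝ)| ≤ 1 * |s| / |(2:ℝ)| := by
          apply div_le_div_of_nonneg_right h1 (by norm_num)
      _ ≤ |s| := by rw [one_mul]; rw [show |(2:ℝ)| = 2 by norm_num]; linarith [abs_nonneg s]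
  -- orthonormality
  have hgram := gram hc₀.le hc hτ hSF hm0 hn0 hb0
  have hn1 : ∀ s i, |n s i| ≤ 1 := fun s => comp_le_one (hgram s).2.1
  have hb1 : ∀ s i, |b s i| ≤ 1 := fun s => comp_le_one (hgram s).2.2
  -- symmetry
  have hce : ∀ s, c (-s) = c s := by
    intro s; rw [hcdef]; simp [neg_sq]
  have hτo : ∀ s, τ (-s) = -τ s := by
    intro s; rw [hτdef]; ring
  have hsym := symmetry hce hτo hc₀.le hc hτ hSF hm0 hn0 hb0
  -- convergence of each component at +∞
  have hcomp : ∀ i, ∃ a, Tendsto (fun s => m s i) atTop (nhds a) := by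
    rcases eq_or_lt_of_le hα0 with hα0' | hαpos
    · -- α = 0
      have hceq : c = (fun _ : ℝ => c₀) := by
        funext s; rw [hcdef, ← hα0']; norm_num
      have hτeq : τ = (fun x : ℝ => x / 2) := by
        funext s; rw [hτdef, ← hα0']; norm_num
      rw [hceq, hτeq] at hSF
      exact tendsto_atTop_zero hc₀ hSF hb1
    · exact tendsto_atTop_pos hc₀ hαpos hcdef hSF hn1
  -- assemble the limit vector
  choose A hA using hcomp
  have htop : Tendsto m atTop (nhds A) := tendsto_pi_nhds.2 hA
  -- unit norm of the limit
  have hunit : (A 0) ^ 2 + (A 1) ^ 2 + (A 2) ^ 2 = 1 := by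
    have h1 : Tendsto (fun s => (m s 0) ^ 2 + (m s 1) ^ 2 + (m s 2) ^ 2) atTop
        (nhds ((A 0) ^ 2 + (A 1) ^ 2 + (A 2) ^ 2)) :=
      (((hA 0).pow 2).add ((hA 1).pow 2)).add ((hA 2).pow 2)
    have h2 : Tendsto (fun s => (m s 0) ^ 2 + (m s 1) ^ 2 + (m s 2) ^ 2) atTop (nhds 1) := by
      apply tendsto_const_nhds.congr
      intro s
      have := (hgram s).1
      unfold dot3 at this
      nlinarith [this]
    exact tendsto_nhds_unique h1 h2
  -- limit at -∞
  have hbot : Tendsto m atBot (nhds (Rf A)) := by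
    have h1 : Tendsto (fun s => m (-s)) atTop (nhds (Rf A)) := by
      have h2 : Tendsto (fun s => Rf (m s)) atTop (nhds (Rf A)) := by
        refine tendsto_pi_nhds.2 fun i => ?_
        fin_cases i
        · exact hA 0
        · exact (hA 1).neg
        · exact (hA 2).neg
      exact h2.congr fun s => (hsym s).symm
    have h3 := h1.comp (tendsto_neg_atBot_atTop : Tendsto (fun x : ℝ => -x) atBot atTop)
    refine h3.congr fun s => ?_
    simp
  have hRfA : Rf A = ![A 0, -A 1, -A 2] := rfl
  -- scaled limits
  have hsqrt : Tendsto Real.sqrt (nhdsWithin 0 (Set.Ioi 0)) (nhdsWithin 0 (Set.Ioi 0)) := by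
    rw [tendsto_nhdsWithin_iff]
    constructor
    · exact (Real.continuous_sqrt.tendsto' 0 0 (by simp)).mono_left nhdsWithin_le_nhds
    · filter_upwards [self_mem_nhdsWithin] with t ht
      exact Real.sqrt_pos.2 ht
  have hinv : Tendsto (fun x : ℝ => x⁻¹) (nhdsWithin 0 (Set.Ioi 0)) atTop :=
    tendsto_inv_nhdsGT_zero
  refine ⟨A, hunit, htop, hRfA ▸ hbot, ?_, ?_⟩
  · intro s hs
    have hdiv : Tendsto (fun t : ℝ => s / Real.sqrt t) (nhdsWithin 0 (Set.Ioi 0)) atTop := by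
      have h4 : Tendsto (fun x : ℝ => s * x⁻¹) (nhdsWithin 0 (Set.Ioi 0)) atTop :=
        (hinv.const_mul_atTop hs)
      have h5 := h4.comp hsqrt
      refine h5.congr fun t => ?_
      simp [div_eq_mul_inv, Function.comp]
    exact (htop.comp hdiv).congr fun t => rfl
  · intro s hs
    have hdiv : Tendsto (fun t : ℝ => s / Real.sqrt t) (nhdsWithin 0 (Set.Ioi 0)) atBot := by
      have h4 : Tendsto (fun x : ℝ => (-s) * x⁻¹) (nhdsWithin 0 (Set.Ioi 0)) atTop :=
        (hinv.const_mul_atTop (by linarith))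
      have h5 := (h4.comp hsqrt)
      have h6 := tendsto_neg_atTop_atBot.comp h5
      refine h6.congr fun t => ?_
      simp [div_eq_mul_inv, Function.comp]
    exact (hRfA ▸ (hbot.comp hdiv)).congr fun t => rfl
end

section
/- Let c₀>0, α∈[0,1], β=√(1−α²), and let m,n,b:ℝ→ℝ³ solve the self-similar profile system. Let A⁺∈ℝ³ be the limit of m(s) as s→+∞ and A⁻=(A₁⁺,−A₂⁺,−A₃⁺) the limit as s→−∞, and set M(s,t)=m(s/√t) for t>0. Then for every p∈(1,∞) there exists a constant C>0 such that for all t>0, the L^p(ℝ)-norm in s of M(s,t) − A⁺·χ_{(0,∞)}(s) − A⁻·χ_{(−∞,0)}(s) is at most C·t^{1/(2p)}. Moreover, if α>0 the same estimate also holds for p=1. -/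
open Real Filter

open MeasureTheory

namespace ProfileAux

open Set

/-! ### Integral estimates -/

lemma tail_lintegral {q K r : ℝ} (hq : 1 < q) (hr : 0 < r) (hK : 0 ≤ K) :
    ∫⁻ s in Ioi r, ENNReal.ofReal (K * (r/|s|)^q) ≤ ENNReal.ofReal (K * r/(q-1)) := by
  have hmeas : MeasurableSet (Ioi r) := measurableSet_Ioi
  have heq : EqOn (fun s : ℝ => K * (r/|s|)^q) (fun s : ℝ => (K * r^q) * s^(-q)) (Ioi r) := by
    intro s hs
    have hs0 : 0 < s := hr.trans hs
    simp only [abs_of_pos hs0]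
    rw [Real.div_rpow hr.le hs0.le, Real.rpow_neg hs0.le]
    ring
  have hInt : IntegrableOn (fun s : ℝ => K * (r/|s|)^q) (Ioi r) := by
    refine (IntegrableOn.congr_fun ?_ heq.symm hmeas)
    exact (integrableOn_Ioi_rpow_of_lt (by linarith) hr).const_mul _
  have hnn : 0 ≤ᵐ[volume.restrict (Ioi r)] (fun s : ℝ => K * (r/|s|)^q) := by
    refine (ae_restrict_iff' hmeas).2 (ae_of_all _ fun s hs => ?_)
    have hs0 : 0 < s := hr.trans hs
    positivity
  rw [← ofReal_integral_eq_lintegral_ofReal hInt hnn]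
  apply ENNReal.ofReal_le_ofReal
  rw [setIntegral_congr_fun hmeas heq, integral_const_mul, integral_Ioi_rpow_of_lt (by linarith) hr]
  have key : r ^ q * r ^ (-q + 1) = r := by
    rw [← Real.rpow_add hr]; norm_num
  have hq1 : (0:ℝ) < q - 1 := by linarith
  have hneg : -q + 1 = -(q - 1) := by ring
  rw [hneg, div_neg, neg_div, neg_neg]
  calc K * r ^ q * (r ^ (-(q - 1)) / (q - 1)) = K * (r ^ q * r ^ (-(q-1))) / (q - 1) := by ring
    _ = K * r / (q - 1) := by rw [← hneg, key]
    _ ≤ K * r / (q - 1) := le_rfl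

lemma key_lintegral {G : ℝ → ℝ} {q D K r : ℝ} (hq : 1 < q) (hr : 0 < r)
    (hG : ∀ s, 0 ≤ G s) (h1 : ∀ s, G s ≤ D) (hK : 0 ≤ K)
    (h2 : ∀ s : ℝ, r < |s| → G s ≤ K * (r / |s|) ^ q) :
    ∫⁻ s : ℝ, ENNReal.ofReal (G s) ≤ ENNReal.ofReal ((2 * D + 2 * K / (q - 1)) * r) := by
  have hD : 0 ≤ D := le_trans (hG 0) (h1 0)
  have hKr : 0 ≤ K * r / (q - 1) := div_nonneg (mul_nonneg hK hr.le) (by linarith)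
  have hcover : (univ : Set ℝ) = Icc (-r) r ∪ (Iio (-r) ∪ Ioi r) := by
    ext s
    simp only [mem_univ, mem_union, mem_Icc, mem_Iio, mem_Ioi, true_iff]
    by_cases h' : -r ≤ s ∧ s ≤ r
    · exact Or.inl h'
    · rcases not_and_or.mp h' with h'' | h''
      · exact Or.inr (Or.inl (lt_of_not_ge h''))
      · exact Or.inr (Or.inr (lt_of_not_ge h''))
  have hIcc : ∫⁻ s in Icc (-r) r, ENNReal.ofReal (G s) ≤ ENNReal.ofReal (2 * D * r) := by
    calc ∫⁻ s in Icc (-r) r, ENNReal.ofReal (G s)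
        ≤ ∫⁻ _ in Icc (-r) r, ENNReal.ofReal D :=
          lintegral_mono fun s => ENNReal.ofReal_le_ofReal (h1 s)
      _ = ENNReal.ofReal D * volume (Icc (-r) r) := setLIntegral_const _ _
      _ = ENNReal.ofReal D * ENNReal.ofReal (r - -r) := by rw [Real.volume_Icc]
      _ = ENNReal.ofReal (2 * D * r) := by
          rw [← ENNReal.ofReal_mul hD]; ring_nf
  have hIoi : ∫⁻ s in Ioi r, ENNReal.ofReal (G s) ≤ ENNReal.ofReal (K * r / (q - 1)) := by
    refine le_trans (lintegral_mono_ae ?_) (tail_lintegral hq hr hK)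
    refine (ae_restrict_iff' measurableSet_Ioi).2 (ae_of_all _ fun s hs => ?_)
    refine ENNReal.ofReal_le_ofReal (h2 s ?_)
    rw [abs_of_pos (hr.trans hs)]; exact hs
  have hIio : ∫⁻ s in Iio (-r), ENNReal.ofReal (G s) ≤ ENNReal.ofReal (K * r / (q - 1)) := by
    have hGF : ∫⁻ s in Iio (-r), ENNReal.ofReal (G s)
        ≤ ∫⁻ s in Iio (-r), ENNReal.ofReal (K * (r / |s|) ^ q) := by
      refine lintegral_mono_ae ?_
      refine (ae_restrict_iff' measurableSet_Iio).2 (ae_of_all _ fun s hs => ?_)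
      refine ENNReal.ofReal_le_ofReal (h2 s ?_)
      rw [mem_Iio] at hs
      rw [abs_of_neg (by linarith)]
      linarith
    refine le_trans hGF (le_trans (le_of_eq ?_) (tail_lintegral hq hr hK))
    have hpre : (Neg.neg : ℝ → ℝ) ⁻¹' (Ioi r) = Iio (-r) := by
      ext s; simp [neg_lt, lt_neg]
    calc ∫⁻ s in Iio (-r), ENNReal.ofReal (K * (r / |s|) ^ q)
        = ∫⁻ s in (Neg.neg : ℝ → ℝ) ⁻¹' (Ioi r),
            ENNReal.ofReal (K * (r / |(-s)|) ^ q) := by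
          rw [hpre]; apply lintegral_congr fun s => by rw [abs_neg]
      _ = ∫⁻ s in Ioi r, ENNReal.ofReal (K * (r / |s|) ^ q) :=
          (Measure.measurePreserving_neg volume).setLIntegral_comp_preimage_emb
            (MeasurableEquiv.neg ℝ).measurableEmbedding
            (fun b => ENNReal.ofReal (K * (r / |b|) ^ q)) (Ioi r)
  calc ∫⁻ s : ℝ, ENNReal.ofReal (G s)
      = ∫⁻ s in Icc (-r) r ∪ (Iio (-r) ∪ Ioi r), ENNReal.ofReal (G s) := by
        rw [← hcover, Measure.restrict_univ]
    _ ≤ (∫⁻ s in Icc (-r) r, ENNReal.ofReal (G s)) +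
        (∫⁻ s in Iio (-r) ∪ Ioi r, ENNReal.ofReal (G s)) := lintegral_union_le _ _ _
    _ ≤ (∫⁻ s in Icc (-r) r, ENNReal.ofReal (G s)) +
        ((∫⁻ s in Iio (-r), ENNReal.ofReal (G s)) +
         (∫⁻ s in Ioi r, ENNReal.ofReal (G s))) := by
        gcongr; exact lintegral_union_le _ _ _
    _ ≤ ENNReal.ofReal (2 * D * r) +
        (ENNReal.ofReal (K * r / (q - 1)) + ENNReal.ofReal (K * r / (q - 1))) := by
        gcongr
    _ = ENNReal.ofReal ((2 * D + 2 * K / (q - 1)) * r) := by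
        rw [← ENNReal.ofReal_add hKr hKr, ← ENNReal.ofReal_add (by positivity) (by positivity)]
        congr 1
        field_simp
        ring

/-! ### ODE facts -/

lemma coord_deriv {f : ℝ → Fin 3 → ℝ} {v : Fin 3 → ℝ} {s : ℝ}
    (hf : HasDerivAt f v s) (i : Fin 3) :
    HasDerivAt (fun s => f s i) (v i) s := by
  have := ((ContinuousLinearMap.proj i : (Fin 3 → ℝ) →L[ℝ] ℝ)).hasFDerivAt.comp_hasDerivAt s hf
  exact this

lemma SF.hm {c τ : ℝ → ℝ} {m n b : ℝ → Fin 3 → ℝ} (h : SerretFrenet c τ m n b)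
    (i : Fin 3) (s : ℝ) :
    HasDerivAt (fun s => m s i) (c s * n s i) s := by
  simpa using coord_deriv (h s).1 i

lemma SF.hn {c τ : ℝ → ℝ} {m n b : ℝ → Fin 3 → ℝ} (h : SerretFrenet c τ m n b)
    (i : Fin 3) (s : ℝ) :
    HasDerivAt (fun s => n s i) (-(c s) * m s i + τ s * b s i) s := by
  simpa using coord_deriv (h s).2.1 i

lemma SF.hb {c τ : ℝ → ℝ} {m n b : ℝ → Fin 3 → ℝ} (h : SerretFrenet c τ m n b)
    (i : Fin 3) (s : ℝ) :
    HasDerivAt (fun s => b s i) (-(τ s) * n s i) s := by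
  simpa using coord_deriv (h s).2.2 i

/-- Energy conservation: every coordinate is bounded by √3. -/
lemma SF.bounded {c τ : ℝ → ℝ} {m n b : ℝ → Fin 3 → ℝ} (h : SerretFrenet c τ m n b)
    (hm0 : m 0 = ![1, 0, 0]) (hn0 : n 0 = ![0, 1, 0]) (hb0 : b 0 = ![0, 0, 1]) :
    ∀ s i, |m s i| ≤ Real.sqrt 3 ∧ |n s i| ≤ Real.sqrt 3 ∧ |b s i| ≤ Real.sqrt 3 := by
  set E : ℝ → ℝ := fun s => ∑ i : Fin 3, ((m s i) ^ 2 + (n s i) ^ 2 + (b s i) ^ 2) with hE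
  have hconst : ∀ s, E s = 3 := by
    have hder : ∀ s, HasDerivAt E 0 s := by
      intro s
      have : HasDerivAt E (∑ i : Fin 3,
          (2 * m s i * (c s * n s i) + 2 * n s i * (-(c s) * m s i + τ s * b s i)
            + 2 * b s i * (-(τ s) * n s i))) s := by
        apply HasDerivAt.fun_sum
        intro i _
        have h1 := ((SF.hm h i s).pow 2)
        have h2 := ((SF.hn h i s).pow 2)
        have h3 := ((SF.hb h i s).pow 2)
        have := (h1.add h2).add h3
        exact this.congr_deriv (by ring)
      convert this using 1
      rw [Fin.sum_univ_three]
      ring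
    have hdiff : Differentiable ℝ E := fun s => (hder s).differentiableAt
    have hderiv : ∀ s, deriv E s = 0 := fun s => (hder s).deriv
    intro s
    have := is_const_of_deriv_eq_zero hdiff hderiv s 0
    rw [this, hE]
    simp [hm0, hn0, hb0, Fin.sum_univ_three]
    norm_num
  intro s i
  have hEs := hconst s
  have hterm : ∀ j : Fin 3, (m s j) ^ 2 + (n s j) ^ 2 + (b s j) ^ 2 ≤ 3 := by
    intro j
    have : (m s j) ^ 2 + (n s j) ^ 2 + (b s j) ^ 2
        ≤ ∑ i : Fin 3, ((m s i) ^ 2 + (n s i) ^ 2 + (b s i) ^ 2) := by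
      apply Finset.single_le_sum (f := fun i => (m s i) ^ 2 + (n s i) ^ 2 + (b s i) ^ 2)
        (fun i _ => by positivity) (Finset.mem_univ j)
    simpa [hEs] using this.trans_eq hEs
  have habs : ∀ x : ℝ, x ^ 2 ≤ 3 → |x| ≤ Real.sqrt 3 := by
    intro x hx
    rw [← Real.sqrt_sq_eq_abs]
    exact Real.sqrt_le_sqrt hx
  exact ⟨habs _ (by nlinarith [hterm i, sq_nonneg (n s i), sq_nonneg (b s i)]),
         habs _ (by nlinarith [hterm i, sq_nonneg (m s i), sq_nonneg (b s i)]),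
         habs _ (by nlinarith [hterm i, sq_nonneg (m s i), sq_nonneg (n s i)])⟩

set_option maxHeartbeats 1000000 in
/-- Parity of the profile solution. -/
lemma Profile.symm {c₀ α : ℝ} {m n b : ℝ → Fin 3 → ℝ} (h : ProfileSystem c₀ α m n b) :
    ∀ s : ℝ, m (-s) 0 = m s 0 ∧ m (-s) 1 = -m s 1 ∧ m (-s) 2 = -m s 2 := by
  obtain ⟨hSF, hm0, hn0, hb0⟩ := h
  set c : ℝ → ℝ := fun s => c₀ * Real.exp (-α * s ^ 2 / 4) with hc
  set τ : ℝ → ℝ := fun s => Real.sqrt (1 - α ^ 2) * s / 2 with hτ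
  have cEven : ∀ s, c (-s) = c s := fun s => by simp [hc]
  have τOdd : ∀ s, τ (-s) = -τ s := fun s => by simp [hτ]; ring
  have hmn : ∀ (i : Fin 3) (s : ℝ),
      HasDerivAt (fun s => m (-s) i) (-(c s * n (-s) i)) s := by
    intro i s
    have := (SF.hm hSF i (-s)).comp s (hasDerivAt_neg s)
    rw [cEven] at this
    exact this.congr_deriv (by ring)
  have hnn : ∀ (i : Fin 3) (s : ℝ),
      HasDerivAt (fun s => n (-s) i) (-(-(c s) * m (-s) i + (-τ s) * b (-s) i)) s := by
    intro i s
    have := (SF.hn hSF i (-s)).comp s (hasDerivAt_neg s)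
    rw [cEven, τOdd] at this
    exact this.congr_deriv (by ring)
  have hbn : ∀ (i : Fin 3) (s : ℝ),
      HasDerivAt (fun s => b (-s) i) (-(-(-τ s) * n (-s) i)) s := by
    intro i s
    have := (SF.hb hSF i (-s)).comp s (hasDerivAt_neg s)
    rw [τOdd] at this
    exact this.congr_deriv (by ring)
  set W : ℝ → ℝ := fun s =>
    (m (-s) 0 - m s 0) ^ 2 + (m (-s) 1 + m s 1) ^ 2 + (m (-s) 2 + m s 2) ^ 2 +
    ((n (-s) 0 + n s 0) ^ 2 + (n (-s) 1 - n s 1) ^ 2 + (n (-s) 2 - n s 2) ^ 2) +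
    ((b (-s) 0 + b s 0) ^ 2 + (b (-s) 1 - b s 1) ^ 2 + (b (-s) 2 - b s 2) ^ 2) with hW
  have hder : ∀ s, HasDerivAt W 0 s := by
    intro s
    have H : HasDerivAt W (
      2 * (m (-s) 0 - m s 0) * (-(c s * n (-s) 0) - c s * n s 0) +
      2 * (m (-s) 1 + m s 1) * (-(c s * n (-s) 1) + c s * n s 1) +
      2 * (m (-s) 2 + m s 2) * (-(c s * n (-s) 2) + c s * n s 2) +
      (2 * (n (-s) 0 + n s 0) * (-(-(c s) * m (-s) 0 + (-τ s) * b (-s) 0) + (-(c s) * m s 0 + τ s * b s 0)) +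
       2 * (n (-s) 1 - n s 1) * (-(-(c s) * m (-s) 1 + (-τ s) * b (-s) 1) - (-(c s) * m s 1 + τ s * b s 1)) +
       2 * (n (-s) 2 - n s 2) * (-(-(c s) * m (-s) 2 + (-τ s) * b (-s) 2) - (-(c s) * m s 2 + τ s * b s 2))) +
      (2 * (b (-s) 0 + b s 0) * (-(-(-τ s) * n (-s) 0) + (-(τ s) * n s 0)) +
       2 * (b (-s) 1 - b s 1) * (-(-(-τ s) * n (-s) 1) - (-(τ s) * n s 1)) +
       2 * (b (-s) 2 - b s 2) * (-(-(-τ s) * n (-s) 2) - (-(τ s) * n s 2)))) s := by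
      have t1 := (((hmn 0 s).sub (SF.hm hSF 0 s)).pow 2)
      have t2 := (((hmn 1 s).add (SF.hm hSF 1 s)).pow 2)
      have t3 := (((hmn 2 s).add (SF.hm hSF 2 s)).pow 2)
      have t4 := (((hnn 0 s).add (SF.hn hSF 0 s)).pow 2)
      have t5 := (((hnn 1 s).sub (SF.hn hSF 1 s)).pow 2)
      have t6 := (((hnn 2 s).sub (SF.hn hSF 2 s)).pow 2)
      have t7 := (((hbn 0 s).add (SF.hb hSF 0 s)).pow 2)
      have t8 := (((hbn 1 s).sub (SF.hb hSF 1 s)).pow 2)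
      have t9 := (((hbn 2 s).sub (SF.hb hSF 2 s)).pow 2)
      have := ((((t1.add t2).add t3).add ((t4.add t5).add t6)).add ((t7.add t8).add t9))
      exact this.congr_deriv (by simp only [Pi.add_apply, Pi.sub_apply]; ring)
    convert H using 1
    ring
  have hdiff : Differentiable ℝ W := fun s => (hder s).differentiableAt
  have hW0 : ∀ s, W s = 0 := by
    intro s
    have := is_const_of_deriv_eq_zero hdiff (fun s => (hder s).deriv) s 0
    rw [this, hW]
    simp [hm0, hn0, hb0]
  intro s
  have hws := hW0 s
  simp only [hW] at hws
  have n1 := sq_nonneg (m (-s) 0 - m s 0); have n2 := sq_nonneg (m (-s) 1 + m s 1)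
  have n3 := sq_nonneg (m (-s) 2 + m s 2); have n4 := sq_nonneg (n (-s) 0 + n s 0)
  have n5 := sq_nonneg (n (-s) 1 - n s 1); have n6 := sq_nonneg (n (-s) 2 - n s 2)
  have n7 := sq_nonneg (b (-s) 0 + b s 0); have n8 := sq_nonneg (b (-s) 1 - b s 1)
  have n9 := sq_nonneg (b (-s) 2 - b s 2)
  have e1 : (m (-s) 0 - m s 0) ^ 2 = 0 := by linarith
  have e2 : (m (-s) 1 + m s 1) ^ 2 = 0 := by linarith
  have e3 : (m (-s) 2 + m s 2) ^ 2 = 0 := by linarith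
  refine ⟨by nlinarith [e1], by nlinarith [e2], by nlinarith [e3]⟩

/-! ### Decay estimates -/

/-- Comparison + limit lemma. -/
lemma decay_from_deriv {f H f' H' : ℝ → ℝ} {L : ℝ}
    (hf : ∀ s, 1 ≤ s → HasDerivAt f (f' s) s)
    (hH : ∀ s, 1 ≤ s → HasDerivAt H (H' s) s)
    (hbd : ∀ s, 1 ≤ s → |f' s| ≤ H' s)
    (hfL : Tendsto f atTop (nhds L)) (hH0 : Tendsto H atTop (nhds 0)) :
    ∀ s, 1 ≤ s → |f s - L| ≤ -H s := by
  have mono : ∀ (g g' : ℝ → ℝ), (∀ s, 1 ≤ s → HasDerivAt g (g' s) s) →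
      (∀ s, 1 ≤ s → 0 ≤ g' s) → MonotoneOn g (Ici 1) := by
    intro g g' hg hg'
    apply monotoneOn_of_deriv_nonneg (convex_Ici 1)
    · exact fun s hs => ((hg s hs).continuousAt.continuousWithinAt)
    · intro s hs
      rw [interior_Ici] at hs
      exact ((hg s (le_of_lt hs)).differentiableAt.differentiableWithinAt)
    · intro s hs
      rw [interior_Ici] at hs
      rw [(hg s hs.le).deriv]
      exact hg' s hs.le
  have m1 : MonotoneOn (fun s => H s - f s) (Ici 1) := by
    refine mono _ (fun s => H' s - f' s) (fun s hs => (hH s hs).sub (hf s hs)) ?_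
    intro s hs
    show (0:ℝ) ≤ H' s - f' s
    have := abs_le.mp (hbd s hs)
    linarith [this.2]
  have m2 : MonotoneOn (fun s => H s + f s) (Ici 1) := by
    refine mono _ (fun s => H' s + f' s) (fun s hs => (hH s hs).add (hf s hs)) ?_
    intro s hs
    show (0:ℝ) ≤ H' s + f' s
    have := abs_le.mp (hbd s hs)
    linarith [this.1]
  intro s hs
  have key : ∀ S, s ≤ S → |f S - f s| ≤ H S - H s := by
    intro S hS
    have hS1 : (1:ℝ) ≤ S := hs.trans hS
    have a1 := m1 (mem_Ici.mpr hs) (mem_Ici.mpr hS1) hS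
    have a2 := m2 (mem_Ici.mpr hs) (mem_Ici.mpr hS1) hS
    simp only at a1 a2
    rw [abs_le]
    constructor <;> linarith
  have t1 : Tendsto (fun S => |f S - f s|) atTop (nhds (|L - f s|)) :=
    ((hfL.sub tendsto_const_nhds).abs)
  have t2 : Tendsto (fun S => H S - H s) atTop (nhds (0 - H s)) :=
    (hH0.sub tendsto_const_nhds)
  have := le_of_tendsto_of_tendsto t1 t2 (eventually_atTop.mpr ⟨s, key⟩)
  rw [abs_sub_comm] at this
  linarith [this]

lemma exp_neg_le_inv {x : ℝ} (hx : 0 < x) : Real.exp (-x) ≤ x⁻¹ := by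
  rw [Real.exp_neg]
  exact inv_anti₀ hx (by linarith [Real.add_one_le_exp x])

lemma exp_neg_le_sq {x : ℝ} (hx : 0 < x) : Real.exp (-x) ≤ 4 / x ^ 2 := by
  have h1 : x ^ 2 / 4 ≤ Real.exp x := by
    have h2 : (1 + x/2) ^ 2 ≤ (Real.exp (x/2)) ^ 2 := by
      apply pow_le_pow_left₀ (by linarith) (by linarith [Real.add_one_le_exp (x/2)]) 2
    have h3 : (Real.exp (x/2)) ^ 2 = Real.exp x := by
      rw [← Real.exp_nat_mul]; push_cast; ring_nf
    nlinarith [h2, h3]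
  rw [Real.exp_neg]
  rw [inv_le_comm₀ (Real.exp_pos x) (by positivity), inv_div]
  calc x ^ 2 / 4 ≤ Real.exp x := h1

section decay
variable {c₀ α : ℝ} {m n b : ℝ → Fin 3 → ℝ} {Ap : Fin 3 → ℝ}

lemma decay_exp (h : ProfileSystem c₀ α m n b) (hc₀ : 0 < c₀) (hαpos : 0 < α)
    (hAp : Tendsto m atTop (nhds Ap)) :
    ∀ i s, 1 ≤ s → |m s i - Ap i| ≤ (4 * Real.sqrt 3 * c₀ / α) * Real.exp (-(α/4) * s) := by
  obtain ⟨hSF, hm0, hn0, hb0⟩ := h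
  have hbd3 := SF.bounded hSF hm0 hn0 hb0
  set B : ℝ := 4 * Real.sqrt 3 * c₀ / α with hB
  have hBpos : 0 < B := by
    have := Real.sqrt_pos.mpr (by norm_num : (0:ℝ) < 3)
    positivity
  intro i
  have hH : ∀ s : ℝ, HasDerivAt (fun s => -B * Real.exp (-(α/4) * s))
      (Real.sqrt 3 * c₀ * Real.exp (-(α/4) * s)) s := by
    intro s
    have h1 : HasDerivAt (fun s : ℝ => -(α/4) * s) (-(α/4)) s := by
      simpa using (hasDerivAt_id s).const_mul (-(α/4))
    have h2 := (h1.exp).const_mul (-B)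
    refine h2.congr_deriv ?_
    rw [hB]
    field_simp
  have hres := decay_from_deriv (f' := fun s => (c₀ * Real.exp (-α * s ^ 2 / 4)) * n s i)
    (fun s _ => SF.hm hSF i s) (fun s _ => hH s) ?_ (tendsto_pi_nhds.1 hAp i) ?_
  · intro s hs
    have := hres s hs
    simpa using this
  · intro s hs
    rw [abs_mul]
    have h1 : |c₀ * Real.exp (-α * s ^ 2 / 4)| = c₀ * Real.exp (-α * s ^ 2 / 4) := by
      rw [abs_of_pos]; positivity
    rw [h1]
    have h2 : Real.exp (-α * s ^ 2 / 4) ≤ Real.exp (-(α/4) * s) := by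
      apply Real.exp_le_exp.mpr
      nlinarith [sq_nonneg (s-1), hαpos.le]
    calc c₀ * Real.exp (-α * s ^ 2 / 4) * |n s i|
        ≤ c₀ * Real.exp (-(α/4) * s) * Real.sqrt 3 := by
          apply mul_le_mul (by nlinarith [Real.exp_pos (-α * s^2/4), Real.exp_pos (-(α/4)*s)])
            (hbd3 s i).2.1 (abs_nonneg _) (by positivity)
      _ = Real.sqrt 3 * c₀ * Real.exp (-(α/4) * s) := by ring
  · have ht : Tendsto (fun s : ℝ => -(α/4) * s) atTop atBot := by
      apply Tendsto.const_mul_atTop_of_neg (by linarith : -(α/4) < 0) tendsto_id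
    have := (Real.tendsto_exp_atBot.comp ht).const_mul (-B)
    simpa using this

lemma decay_zero (h : ProfileSystem c₀ 0 m n b) (hc₀ : 0 < c₀)
    (hAp : Tendsto m atTop (nhds Ap)) :
    ∀ i s, 1 ≤ s → |m s i - Ap i| ≤ (4 * Real.sqrt 3 * c₀) / s := by
  obtain ⟨hSF, hm0, hn0, hb0⟩ := h
  have hbd3 := SF.bounded hSF hm0 hn0 hb0
  have hsq3 : 0 < Real.sqrt 3 := Real.sqrt_pos.mpr (by norm_num)
  have hc : ∀ s : ℝ, c₀ * Real.exp (-(0:ℝ) * s ^ 2 / 4) = c₀ := by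
    intro s; norm_num
  have hτ : ∀ s : ℝ, Real.sqrt (1 - (0:ℝ) ^ 2) * s / 2 = s / 2 := by
    intro s; norm_num
  intro i
  set φ : ℝ → ℝ := fun s => m s i + 2 * c₀ / s * b s i with hφ
  have hφder : ∀ s : ℝ, 1 ≤ s → HasDerivAt φ (-2 * c₀ * b s i / s ^ 2) s := by
    intro s hs
    have hs0 : s ≠ 0 := by linarith
    have h1 : HasDerivAt (fun s : ℝ => 2 * c₀ / s) (-(2 * c₀) / s ^ 2) s := by
      have := (hasDerivAt_inv hs0).const_mul (2 * c₀)
      refine this.congr_deriv ?_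
      field_simp
    have h2 := h1.mul (SF.hb hSF i s)
    have h3 := (SF.hm hSF i s).add h2
    rw [hc] at h3
    refine h3.congr_deriv ?_
    rw [hτ]
    field_simp
    ring
  have hHder : ∀ s : ℝ, 1 ≤ s → HasDerivAt (fun s : ℝ => -(2 * Real.sqrt 3 * c₀) * s⁻¹)
      (2 * Real.sqrt 3 * c₀ / s ^ 2) s := by
    intro s hs
    have hs0 : s ≠ 0 := by linarith
    have := (hasDerivAt_inv hs0).const_mul (-(2 * Real.sqrt 3 * c₀))
    refine this.congr_deriv ?_
    field_simp
  have hφlim : Tendsto φ atTop (nhds (Ap i)) := by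
    have h1 : Tendsto (fun s : ℝ => 2 * c₀ / s * b s i) atTop (nhds 0) := by
      apply squeeze_zero_norm' (a := fun s : ℝ => 2 * c₀ * Real.sqrt 3 / s)
      · filter_upwards [eventually_ge_atTop (1:ℝ)] with s hs
        rw [norm_mul]
        have h2 : ‖2 * c₀ / s‖ = 2 * c₀ / s := by
          rw [Real.norm_eq_abs, abs_of_pos]; positivity
        rw [h2, Real.norm_eq_abs]
        calc 2 * c₀ / s * |b s i| ≤ 2 * c₀ / s * Real.sqrt 3 := by
              apply mul_le_mul_of_nonneg_left (hbd3 s i).2.2 (by positivity)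
          _ = 2 * c₀ * Real.sqrt 3 / s := by ring
      · have := tendsto_inv_atTop_zero (𝕜 := ℝ)
        have h3 := this.const_mul (2 * c₀ * Real.sqrt 3)
        simpa [div_eq_mul_inv] using h3
    have := (tendsto_pi_nhds.1 hAp i).add h1
    simpa using this
  have hH0 : Tendsto (fun s : ℝ => -(2 * Real.sqrt 3 * c₀) * s⁻¹) atTop (nhds 0) := by
    have := (tendsto_inv_atTop_zero (𝕜 := ℝ)).const_mul (-(2 * Real.sqrt 3 * c₀))
    simpa using this
  have hres := decay_from_deriv (f' := fun s => -2 * c₀ * b s i / s ^ 2)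
    (H' := fun s => 2 * Real.sqrt 3 * c₀ / s ^ 2) hφder hHder ?_ hφlim hH0
  · intro s hs
    have h4 := hres s hs
    have h5 : |m s i - Ap i| ≤ |φ s - Ap i| + |2 * c₀ / s * b s i| := by
      rw [hφ]
      have : m s i - Ap i = (m s i + 2 * c₀ / s * b s i - Ap i) - 2 * c₀ / s * b s i := by ring
      rw [this]
      exact abs_sub _ _
    have hs0 : (0:ℝ) < s := by linarith
    have h6 : |2 * c₀ / s * b s i| ≤ 2 * c₀ * Real.sqrt 3 / s := by
      rw [abs_mul]
      have h7 : |2 * c₀ / s| = 2 * c₀ / s := by rw [abs_of_pos]; positivity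
      rw [h7]
      calc 2 * c₀ / s * |b s i| ≤ 2 * c₀ / s * Real.sqrt 3 :=
            mul_le_mul_of_nonneg_left (hbd3 s i).2.2 (by positivity)
        _ = 2 * c₀ * Real.sqrt 3 / s := by ring
    have h8 : -(-(2 * Real.sqrt 3 * c₀) * s⁻¹) = 2 * Real.sqrt 3 * c₀ / s := by
      field_simp
    rw [h8] at h4
    calc |m s i - Ap i| ≤ |φ s - Ap i| + |2 * c₀ / s * b s i| := h5
      _ ≤ 2 * Real.sqrt 3 * c₀ / s + 2 * c₀ * Real.sqrt 3 / s := add_le_add h4 h6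
      _ = 4 * Real.sqrt 3 * c₀ / s := by ring
  · intro s hs
    have hs0 : (0:ℝ) < s := by linarith
    rw [abs_div, abs_of_pos (by positivity : (0:ℝ) < s ^ 2),
      div_le_div_iff_of_pos_right (by positivity : (0:ℝ) < s ^ 2)]
    rw [abs_mul]
    have h9 : |(-2 * c₀)| = 2 * c₀ := by
      rw [abs_of_neg (by linarith)]; ring
    rw [h9]
    nlinarith [(hbd3 s i).2.2, abs_nonneg (b s i)]

end decay

end ProfileAux

open ProfileAux Set

/-- Rate of convergence of the self-similar solution
`M(s,t) = m(s/√t)` towards the jump initial datum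
`A⁺ χ_{(0,∞)} + A⁻ χ_{(−∞,0)}` in `L^p(ℝ)`: for every `p ∈ (1,∞)` the
`L^p`-norm is `≤ C t^{1/(2p)}`, and also for `p = 1` when `α > 0`. -/
theorem Lp_convergence_rate (c₀ α : ℝ) (hc₀ : 0 < c₀)
    (hα : α ∈ Set.Icc (0 : ℝ) 1)
    (m n b : ℝ → Fin 3 → ℝ) (h : ProfileSystem c₀ α m n b)
    (Ap : Fin 3 → ℝ) (hAp : Tendsto m atTop (nhds Ap))
    (Am : Fin 3 → ℝ) (hAm : Am = ![Ap 0, -Ap 1, -Ap 2]) :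
    (∀ p : ℝ, 1 < p → ∃ C : ℝ, 0 < C ∧ ∀ t : ℝ, 0 < t →
      eLpNorm
        (fun s : ℝ => m (s / Real.sqrt t)
          - (Set.Ioi (0 : ℝ)).indicator (fun _ => Ap) s
          - (Set.Iio (0 : ℝ)).indicator (fun _ => Am) s)
        (ENNReal.ofReal p) volume
        ≤ ENNReal.ofReal (C * t ^ (1 / (2 * p)))) ∧
    (0 < α → ∃ C : ℝ, 0 < C ∧ ∀ t : ℝ, 0 < t →
      eLpNorm
        (fun s : ℝ => m (s / Real.sqrt t)
          - (Set.Ioi (0 : ℝ)).indicator (fun _ => Ap) s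
          - (Set.Iio (0 : ℝ)).indicator (fun _ => Am) s)
        1 volume
        ≤ ENNReal.ofReal (C * t ^ (1 / (2 : ℝ)))) := by
  have hsq3 : 0 < Real.sqrt 3 := Real.sqrt_pos.mpr (by norm_num)
  have hbd3 := SF.bounded h.1 h.2.1 h.2.2.1 h.2.2.2
  have hAp3 : ∀ i, |Ap i| ≤ Real.sqrt 3 := by
    intro i
    exact le_of_tendsto ((tendsto_pi_nhds.1 hAp i).abs)
      (Eventually.of_forall fun s => (hbd3 s i).1)
  have hAm3 : ∀ i, |Am i| ≤ Real.sqrt 3 := by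
    intro i
    rw [hAm]
    fin_cases i <;> simpa using hAp3 _
  have hsymm := Profile.symm h
  -- uniform decay C₁ / s
  obtain ⟨C₁, hC₁pos, hC₁⟩ : ∃ C₁ : ℝ, 0 < C₁ ∧ ∀ i s, 1 ≤ s → |m s i - Ap i| ≤ C₁ / s := by
    rcases eq_or_lt_of_le hα.1 with hα0 | hαpos
    · refine ⟨4 * Real.sqrt 3 * c₀, by positivity, ?_⟩
      rw [← hα0] at h
      exact decay_zero h hc₀ hAp
    · refine ⟨(4 * Real.sqrt 3 * c₀ / α) * (4 / α), by positivity, ?_⟩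
      intro i s hs
      have h1 := decay_exp h hc₀ hαpos hAp i s hs
      have h2 : Real.exp (-(α/4) * s) ≤ 4 / (α * s) := by
        have h3 : -(α/4) * s = -(α * s / 4) := by ring
        rw [h3]
        have := exp_neg_le_inv (x := α * s / 4) (by positivity)
        calc Real.exp (-(α * s / 4)) ≤ (α * s / 4)⁻¹ := this
          _ = 4 / (α * s) := by rw [inv_div]
      calc |m s i - Ap i| ≤ (4 * Real.sqrt 3 * c₀ / α) * Real.exp (-(α/4) * s) := h1
        _ ≤ (4 * Real.sqrt 3 * c₀ / α) * (4 / (α * s)) := by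
            apply mul_le_mul_of_nonneg_left h2 (by positivity)
        _ = (4 * Real.sqrt 3 * c₀ / α) * (4 / α) / s := by
            field_simp
  -- decay on the negative side
  have hC₁neg : ∀ i s, s ≤ (-1 : ℝ) → |m s i - Am i| ≤ C₁ / (-s) := by
    intro i s hs
    have hns : (1:ℝ) ≤ -s := by linarith
    have hsymm' := hsymm (-s)
    rw [neg_neg] at hsymm'
    have hAm0 : Am 0 = Ap 0 := by rw [hAm]; simp
    have hAm1 : Am 1 = -Ap 1 := by rw [hAm]; simp
    have hAm2 : Am 2 = -Ap 2 := by rw [hAm]; simp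
    fin_cases i
    · show |m s 0 - Am 0| ≤ C₁ / (-s)
      rw [hsymm'.1, hAm0]
      exact hC₁ 0 (-s) hns
    · show |m s 1 - Am 1| ≤ C₁ / (-s)
      have h1 : m s 1 = -(m (-s) 1) := by linarith [hsymm'.2.1]
      rw [h1, hAm1]
      have h2 : -(m (-s) 1) - -Ap 1 = -(m (-s) 1 - Ap 1) := by ring
      rw [h2, abs_neg]
      exact hC₁ 1 (-s) hns
    · show |m s 2 - Am 2| ≤ C₁ / (-s)
      have h1 : m s 2 = -(m (-s) 2) := by linarith [hsymm'.2.2]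
      rw [h1, hAm2]
      have h2 : -(m (-s) 2) - -Ap 2 = -(m (-s) 2 - Ap 2) := by ring
      rw [h2, abs_neg]
      exact hC₁ 2 (-s) hns
  -- pointwise bounds on the scaled function
  set F : ℝ → ℝ → Fin 3 → ℝ := fun t s =>
    m (s / Real.sqrt t)
      - (Set.Ioi (0 : ℝ)).indicator (fun _ => Ap) s
      - (Set.Iio (0 : ℝ)).indicator (fun _ => Am) s with hF
  have hFval : ∀ t s i, 0 < t →
      (0 < s → F t s i = m (s / Real.sqrt t) i - Ap i) ∧
      (s < 0 → F t s i = m (s / Real.sqrt t) i - Am i) ∧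
      (s = 0 → F t s i = m 0 i) := by
    intro t s i ht
    refine ⟨fun hs => ?_, fun hs => ?_, fun hs => ?_⟩
    · rw [hF]
      simp [indicator_of_mem (mem_Ioi.mpr hs), indicator_of_notMem (by simp [hs.le] : s ∉ Iio 0)]
    · rw [hF]
      simp [indicator_of_notMem (by simp [hs.le] : s ∉ Ioi 0), indicator_of_mem (mem_Iio.mpr hs)]
    · rw [hF, hs]
      simp
  have hFbd : ∀ t s, 0 < t → ‖F t s‖ ≤ 2 * Real.sqrt 3 := by
    intro t s ht
    rw [pi_norm_le_iff_of_nonneg (by positivity)]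
    intro i
    rw [Real.norm_eq_abs]
    rcases lt_trichotomy s 0 with hs | hs | hs
    · rw [(hFval t s i ht).2.1 hs]
      calc |m (s / Real.sqrt t) i - Am i| ≤ |m (s / Real.sqrt t) i| + |Am i| := abs_sub _ _
        _ ≤ Real.sqrt 3 + Real.sqrt 3 := add_le_add (hbd3 _ i).1 (hAm3 i)
        _ = 2 * Real.sqrt 3 := by ring
    · rw [(hFval t s i ht).2.2 hs]
      calc |m 0 i| ≤ Real.sqrt 3 := (hbd3 0 i).1
        _ ≤ 2 * Real.sqrt 3 := by linarith
    · rw [(hFval t s i ht).1 hs]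
      calc |m (s / Real.sqrt t) i - Ap i| ≤ |m (s / Real.sqrt t) i| + |Ap i| := abs_sub _ _
        _ ≤ Real.sqrt 3 + Real.sqrt 3 := add_le_add (hbd3 _ i).1 (hAp3 i)
        _ = 2 * Real.sqrt 3 := by ring
  have hFtail : ∀ t s, 0 < t → Real.sqrt t < |s| → ‖F t s‖ ≤ C₁ * (Real.sqrt t / |s|) := by
    intro t s ht hts
    have hrt : 0 < Real.sqrt t := Real.sqrt_pos.mpr ht
    rw [pi_norm_le_iff_of_nonneg (by positivity)]
    intro i
    rw [Real.norm_eq_abs]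
    rcases lt_trichotomy s 0 with hs | hs | hs
    · rw [(hFval t s i ht).2.1 hs]
      have h1 : s / Real.sqrt t ≤ -1 := by
        rw [div_le_iff₀ hrt]
        rw [abs_of_neg hs] at hts
        linarith
      have := hC₁neg i (s / Real.sqrt t) h1
      calc |m (s / Real.sqrt t) i - Am i| ≤ C₁ / (-(s / Real.sqrt t)) := this
        _ = C₁ * (Real.sqrt t / |s|) := by
            rw [abs_of_neg hs]
            field_simp
    · exfalso; rw [hs] at hts; simp at hts; linarith
    · rw [(hFval t s i ht).1 hs]
      have h1 : (1:ℝ) ≤ s / Real.sqrt t := by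
        rw [le_div_iff₀ hrt]
        rw [abs_of_pos hs] at hts
        linarith
      have := hC₁ i (s / Real.sqrt t) h1
      calc |m (s / Real.sqrt t) i - Ap i| ≤ C₁ / (s / Real.sqrt t) := this
        _ = C₁ * (Real.sqrt t / |s|) := by
            rw [abs_of_pos hs, div_div_eq_mul_div]
            ring
  constructor
  · -- the Lᵖ case
    intro p hp
    have hp0 : (0:ℝ) < p := by linarith
    set D : ℝ := (2 * Real.sqrt 3) ^ p with hD
    set K : ℝ := C₁ ^ p with hK
    set A : ℝ := 2 * D + 2 * K / (p - 1) with hA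
    have hDpos : 0 < D := Real.rpow_pos_of_pos (by positivity) _
    have hKpos : 0 < K := Real.rpow_pos_of_pos hC₁pos _
    have hApos : 0 < A := by
      have : 0 < 2 * K / (p - 1) := by
        apply div_pos (by positivity) (by linarith)
      rw [hA]; positivity
    refine ⟨A ^ (1/p), Real.rpow_pos_of_pos hApos _, ?_⟩
    intro t ht
    have hrt : 0 < Real.sqrt t := Real.sqrt_pos.mpr ht
    have hlint : ∫⁻ s : ℝ, ENNReal.ofReal (‖F t s‖ ^ p)
        ≤ ENNReal.ofReal (A * Real.sqrt t) := by
      apply key_lintegral hp hrt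
      · intro s; positivity
      · intro s
        rw [hD]
        exact Real.rpow_le_rpow (norm_nonneg _) (hFbd t s ht) hp0.le
      · exact hKpos.le
      · intro s hs
        rw [hK, ← Real.mul_rpow hC₁pos.le (by positivity)]
        exact Real.rpow_le_rpow (norm_nonneg _) (hFtail t s ht hs) hp0.le
    have heL : eLpNorm (F t) (ENNReal.ofReal p) volume
        = (∫⁻ s : ℝ, ENNReal.ofReal (‖F t s‖ ^ p)) ^ (1/p) := by
      rw [eLpNorm_eq_lintegral_rpow_enorm_toReal
        (by simp [ENNReal.ofReal_eq_zero]; linarith)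
        (by simp)]
      rw [ENNReal.toReal_ofReal hp0.le]
      congr 1
      apply lintegral_congr
      intro s
      rw [← ofReal_norm, ENNReal.ofReal_rpow_of_nonneg (norm_nonneg _) hp0.le]
    calc eLpNorm (F t) (ENNReal.ofReal p) volume
        = (∫⁻ s : ℝ, ENNReal.ofReal (‖F t s‖ ^ p)) ^ (1/p) := heL
      _ ≤ (ENNReal.ofReal (A * Real.sqrt t)) ^ (1/p) := by
          exact ENNReal.rpow_le_rpow hlint (by positivity)
      _ = ENNReal.ofReal ((A * Real.sqrt t) ^ (1/p)) := by
          rw [ENNReal.ofReal_rpow_of_nonneg (by positivity) (by positivity)]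
      _ = ENNReal.ofReal (A ^ (1/p) * t ^ (1 / (2 * p))) := by
          congr 1
          rw [Real.mul_rpow hApos.le hrt.le]
          congr 1
          rw [Real.sqrt_eq_rpow, ← Real.rpow_mul ht.le]
          congr 1
          try field_simp

  · -- the L¹ case
    intro hαpos
    set B : ℝ := 4 * Real.sqrt 3 * c₀ / α with hB
    have hBpos : 0 < B := by rw [hB]; positivity
    -- quadratic decay
    have hC₂ : ∀ i s, 1 ≤ s → |m s i - Ap i| ≤ (B * 64 / α ^ 2) / s ^ 2 := by
      intro i s hs
      have h1 := decay_exp h hc₀ hαpos hAp i s hs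
      have h2 : Real.exp (-(α/4) * s) ≤ 64 / (α ^ 2 * s ^ 2) := by
        have h3 : -(α/4) * s = -(α * s / 4) := by ring
        rw [h3]
        have := exp_neg_le_sq (x := α * s / 4) (by positivity)
        calc Real.exp (-(α * s / 4)) ≤ 4 / (α * s / 4) ^ 2 := this
          _ = 64 / (α ^ 2 * s ^ 2) := by
              field_simp
              ring
      calc |m s i - Ap i| ≤ B * Real.exp (-(α/4) * s) := h1
        _ ≤ B * (64 / (α ^ 2 * s ^ 2)) := mul_le_mul_of_nonneg_left h2 hBpos.le
        _ = (B * 64 / α ^ 2) / s ^ 2 := by field_simp; try ring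
    set K : ℝ := B * 64 / α ^ 2 with hKdef
    have hKpos : 0 < K := by rw [hKdef]; positivity
    have hC₂neg : ∀ i s, s ≤ (-1:ℝ) → |m s i - Am i| ≤ K / s ^ 2 := by
      intro i s hs
      have hns : (1:ℝ) ≤ -s := by linarith
      have hsymm' := hsymm (-s)
      rw [neg_neg] at hsymm'
      have hsq : (-s) ^ 2 = s ^ 2 := by ring
      have hAm0 : Am 0 = Ap 0 := by rw [hAm]; simp
      have hAm1 : Am 1 = -Ap 1 := by rw [hAm]; simp
      have hAm2 : Am 2 = -Ap 2 := by rw [hAm]; simp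
      fin_cases i
      · show |m s 0 - Am 0| ≤ K / s ^ 2
        rw [hsymm'.1, hAm0]
        have := hC₂ 0 (-s) hns
        rw [hsq] at this
        exact this
      · show |m s 1 - Am 1| ≤ K / s ^ 2
        have h1 : m s 1 = -(m (-s) 1) := by linarith [hsymm'.2.1]
        rw [h1, hAm1]
        have h2 : -(m (-s) 1) - -Ap 1 = -(m (-s) 1 - Ap 1) := by ring
        rw [h2, abs_neg]
        have := hC₂ 1 (-s) hns
        rw [hsq] at this
        exact this
      · show |m s 2 - Am 2| ≤ K / s ^ 2
        have h1 : m s 2 = -(m (-s) 2) := by linarith [hsymm'.2.2]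
        rw [h1, hAm2]
        have h2 : -(m (-s) 2) - -Ap 2 = -(m (-s) 2 - Ap 2) := by ring
        rw [h2, abs_neg]
        have := hC₂ 2 (-s) hns
        rw [hsq] at this
        exact this
    have hFtail2 : ∀ t s, 0 < t → Real.sqrt t < |s| →
        ‖F t s‖ ≤ K * (Real.sqrt t / |s|) ^ (2:ℝ) := by
      intro t s ht hts
      have hrt : 0 < Real.sqrt t := Real.sqrt_pos.mpr ht
      have hs0 : s ≠ 0 := by
        intro hs; rw [hs] at hts; simp at hts; linarith
      have habs : 0 < |s| := abs_pos.mpr hs0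
      have hrw : (Real.sqrt t / |s|) ^ (2:ℝ) = (Real.sqrt t / |s|) ^ (2:ℕ) := by
        rw [show ((2:ℝ)) = ((2:ℕ):ℝ) by norm_num, Real.rpow_natCast]
      rw [hrw]
      rw [pi_norm_le_iff_of_nonneg (by positivity)]
      intro i
      rw [Real.norm_eq_abs]
      have hval : (Real.sqrt t / |s|) ^ (2:ℕ) = t / s ^ 2 := by
        rw [div_pow, sq_abs, Real.sq_sqrt ht.le]
      rcases lt_trichotomy s 0 with hs | hs | hs
      · rw [(hFval t s i ht).2.1 hs]
        have h1 : s / Real.sqrt t ≤ -1 := by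
          rw [div_le_iff₀ hrt]
          rw [abs_of_neg hs] at hts
          linarith
        have := hC₂neg i (s / Real.sqrt t) h1
        calc |m (s / Real.sqrt t) i - Am i| ≤ K / (s / Real.sqrt t) ^ 2 := this
          _ = K * (t / s ^ 2) := by
              rw [div_pow, Real.sq_sqrt ht.le]
              field_simp
          _ = K * (Real.sqrt t / |s|) ^ (2:ℕ) := by rw [hval]
      · exact absurd hs hs0
      · rw [(hFval t s i ht).1 hs]
        have h1 : (1:ℝ) ≤ s / Real.sqrt t := by
          rw [le_div_iff₀ hrt]
          rw [abs_of_pos hs] at hts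
          linarith
        have := hC₂ i (s / Real.sqrt t) h1
        calc |m (s / Real.sqrt t) i - Ap i| ≤ K / (s / Real.sqrt t) ^ 2 := this
          _ = K * (t / s ^ 2) := by
              rw [div_pow, Real.sq_sqrt ht.le]
              field_simp
          _ = K * (Real.sqrt t / |s|) ^ (2:ℕ) := by rw [hval]
    set A : ℝ := 2 * (2 * Real.sqrt 3) + 2 * K / ((2:ℝ) - 1) with hA
    have hApos : 0 < A := by
      rw [hA]
      have : 0 < 2 * K / ((2:ℝ) - 1) := by norm_num; positivity
      positivity
    refine ⟨A, hApos, ?_⟩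
    intro t ht
    have hrt : 0 < Real.sqrt t := Real.sqrt_pos.mpr ht
    have hlint : ∫⁻ s : ℝ, ENNReal.ofReal (‖F t s‖)
        ≤ ENNReal.ofReal (A * Real.sqrt t) := by
      apply key_lintegral (q := (2:ℝ)) (by norm_num) hrt
      · intro s; positivity
      · intro s; exact hFbd t s ht
      · exact hKpos.le
      · intro s hs; exact hFtail2 t s ht hs
    have heL : eLpNorm (F t) 1 volume = ∫⁻ s : ℝ, ENNReal.ofReal (‖F t s‖) := by
      rw [eLpNorm_one_eq_lintegral_enorm]
      apply lintegral_congr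
      intro s
      rw [← ofReal_norm]
    rw [heL]
    refine le_trans hlint (ENNReal.ofReal_le_ofReal ?_)
    rw [Real.sqrt_eq_rpow]
end

section
/- Let c₀>0, α∈[0,1] and β=√(1−α²). Let m=(m₁,m₂,m₃), n=(n₁,n₂,n₃), b=(b₁,b₂,b₃):ℝ→ℝ³ be a solution of the self-similar profile system. Then for all s∈ℝ: m₁(−s)=m₁(s), m₂(−s)=−m₂(s), m₃(−s)=−m₃(s); n₁(−s)=−n₁(s), n₂(−s)=n₂(s), n₃(−s)=n₃(s); and b₁(−s)=−b₁(s), b₂(−s)=b₂(s), b₃(−s)=b₃(s). That is, m₁ is even, m₂ and m₃ are odd, n₁ and b₁ are odd, and n₂, n₃, b₂, b₃ are even. -/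
open Real Filter

section Aux

open Set

/-- The sign pattern `(1, -1, -1)`. -/
def sgn3 : Fin 3 → ℝ := ![1, -1, -1]

/-- The flip map `x ↦ (x₀, -x₁, -x₂)` as a continuous linear map. -/
noncomputable def Aflip : (Fin 3 → ℝ) →L[ℝ] (Fin 3 → ℝ) :=
  ContinuousLinearMap.pi fun i => sgn3 i • ContinuousLinearMap.proj i

@[simp] lemma Aflip_apply (x : Fin 3 → ℝ) (i : Fin 3) : Aflip x i = sgn3 i * x i := rfl

/-- The Serret–Frenet vector field for fixed curvature `γ` and torsion `δ`. -/
def vf (γ δ : ℝ) (p : (Fin 3 → ℝ) × (Fin 3 → ℝ) × (Fin 3 → ℝ)) :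
    (Fin 3 → ℝ) × (Fin 3 → ℝ) × (Fin 3 → ℝ) :=
  (γ • p.2.1, (-γ) • p.1 + δ • p.2.2, (-δ) • p.2.1)

lemma vf_lip (γ δ : ℝ) (K : NNReal) (hK : |γ| + |δ| ≤ (K : ℝ)) :
    LipschitzWith K (vf γ δ) := by
  apply LipschitzWith.of_dist_le_mul
  intro p q
  set D := dist p q with hD
  have h1 : dist p.1 q.1 ≤ D := le_max_left _ _
  have h2 : dist p.2.1 q.2.1 ≤ D :=
    (le_max_left _ _).trans ((le_max_right (dist p.1 q.1) _ : dist p.2 q.2 ≤ D))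
  have h3 : dist p.2.2 q.2.2 ≤ D :=
    (le_max_right _ _).trans ((le_max_right (dist p.1 q.1) _ : dist p.2 q.2 ≤ D))
  have hd0 : (0:ℝ) ≤ D := dist_nonneg
  have hγ : (0:ℝ) ≤ |γ| := abs_nonneg _
  have hδ : (0:ℝ) ≤ |δ| := abs_nonneg _
  have e1 : dist (γ • p.2.1) (γ • q.2.1) = |γ| * dist p.2.1 q.2.1 := by
    rw [dist_smul₀]; simp [Real.norm_eq_abs]
  have e3 : dist ((-δ) • p.2.1) ((-δ) • q.2.1) = |δ| * dist p.2.1 q.2.1 := by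
    rw [dist_smul₀]; simp [Real.norm_eq_abs]
  have e2 : dist ((-γ) • p.1 + δ • p.2.2) ((-γ) • q.1 + δ • q.2.2)
      ≤ |γ| * dist p.1 q.1 + |δ| * dist p.2.2 q.2.2 := by
    refine (dist_add_add_le _ _ _ _).trans ?_
    rw [dist_smul₀, dist_smul₀]
    simp [Real.norm_eq_abs]
  have hb1 : dist (γ • p.2.1) (γ • q.2.1) ≤ K * D := by
    rw [e1]; nlinarith
  have hb2 : dist ((-γ) • p.1 + δ • p.2.2) ((-γ) • q.1 + δ • q.2.2) ≤ K * D := by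
    refine e2.trans ?_; nlinarith
  have hb3 : dist ((-δ) • p.2.1) ((-δ) • q.2.1) ≤ K * D := by
    rw [e3]; nlinarith
  calc dist (vf γ δ p) (vf γ δ q)
      = max (dist (γ • p.2.1) (γ • q.2.1))
          (max (dist ((-γ) • p.1 + δ • p.2.2) ((-γ) • q.1 + δ • q.2.2))
            (dist ((-δ) • p.2.1) ((-δ) • q.2.1))) := by
        rw [vf, vf, Prod.dist_eq, Prod.dist_eq]
    _ ≤ K * D := by
        exact max_le hb1 (max_le hb2 hb3)

end Aux

/-- **Symmetries.** For the self-similar profile,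
`m₁` is even, `m₂, m₃` are odd; `n₁, b₁` are odd and `n₂, n₃, b₂, b₃` are even. -/
theorem profile_symmetries (c₀ α : ℝ) (hc₀ : 0 < c₀)
    (hα : α ∈ Set.Icc (0 : ℝ) 1)
    (m n b : ℝ → Fin 3 → ℝ) (h : ProfileSystem c₀ α m n b) :
    ∀ s : ℝ,
      m (-s) 0 = m s 0 ∧ m (-s) 1 = -m s 1 ∧ m (-s) 2 = -m s 2 ∧
      n (-s) 0 = -n s 0 ∧ n (-s) 1 = n s 1 ∧ n (-s) 2 = n s 2 ∧
      b (-s) 0 = -b s 0 ∧ b (-s) 1 = b s 1 ∧ b (-s) 2 = b s 2 := by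
  obtain ⟨hsf, hm0, hn0, hb0⟩ := h
  set c : ℝ → ℝ := fun s => c₀ * Real.exp (-α * s ^ 2 / 4) with hc
  set τ : ℝ → ℝ := fun s => Real.sqrt (1 - α ^ 2) * s / 2 with hτ
  have hceven : ∀ s : ℝ, c (-s) = c s := by
    intro s; simp only [hc, neg_sq]
  have hτodd : ∀ s : ℝ, τ (-s) = -τ s := by
    intro s; simp only [hτ]; ring
  -- The two solutions
  set Q : ℝ → (Fin 3 → ℝ) × (Fin 3 → ℝ) × (Fin 3 → ℝ) :=
    fun s => (m s, n s, b s) with hQ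
  set P : ℝ → (Fin 3 → ℝ) × (Fin 3 → ℝ) × (Fin 3 → ℝ) :=
    fun s => (Aflip (m (-s)), -(Aflip (n (-s))), -(Aflip (b (-s)))) with hP
  have hQ' : ∀ s : ℝ, HasDerivAt Q (vf (c s) (τ s) (Q s)) s := fun s =>
    (hsf s).1.prodMk ((hsf s).2.1.prodMk (hsf s).2.2)
  have hP' : ∀ s : ℝ, HasDerivAt P (vf (c s) (τ s) (P s)) s := by
    intro s
    have hneg : HasDerivAt (fun u : ℝ => -u) (-1 : ℝ) s := hasDerivAt_neg s
    have hM : HasDerivAt (fun u => Aflip (m (-u)))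
        ((c s) • (-(Aflip (n (-s))))) s := by
      have h3 := ((hsf (-s)).1).scomp s hneg
      have h4 := Aflip.hasFDerivAt.comp_hasDerivAt s h3
      refine h4.congr_deriv ?_
      funext i
      simp only [Aflip_apply, Pi.smul_apply, Pi.neg_apply, smul_eq_mul, map_smul,
        Pi.smul_apply, hceven]
      ring
    have hN : HasDerivAt (fun u => -(Aflip (n (-u))))
        ((-(c s)) • (Aflip (m (-s))) + (τ s) • (-(Aflip (b (-s))))) s := by
      have h3 := ((hsf (-s)).2.1).scomp s hneg
      have h4 := (Aflip.hasFDerivAt.comp_hasDerivAt s h3).neg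
      refine h4.congr_deriv ?_
      funext i
      simp only [Aflip_apply, Pi.smul_apply, Pi.neg_apply, Pi.add_apply, smul_eq_mul,
        map_smul, map_add, hceven, hτodd]
      ring
    have hB : HasDerivAt (fun u => -(Aflip (b (-u))))
        ((-(τ s)) • (-(Aflip (n (-s))))) s := by
      have h3 := ((hsf (-s)).2.2).scomp s hneg
      have h4 := (Aflip.hasFDerivAt.comp_hasDerivAt s h3).neg
      refine h4.congr_deriv ?_
      funext i
      simp only [Aflip_apply, Pi.smul_apply, Pi.neg_apply, smul_eq_mul, map_smul, hτodd]
      ring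
    exact hM.prodMk (hN.prodMk hB)
  have hPcont : Continuous P :=
    continuous_iff_continuousAt.mpr fun s => (hP' s).continuousAt
  have hQcont : Continuous Q :=
    continuous_iff_continuousAt.mpr fun s => (hQ' s).continuousAt
  have heq0 : P 0 = Q 0 := by
    simp only [hP, hQ, neg_zero, hm0, hn0, hb0]
    refine Prod.ext ?_ (Prod.ext ?_ ?_) <;>
      · funext i; fin_cases i <;> simp [sgn3]
  -- uniqueness on each interval
  have key : ∀ s : ℝ, P s = Q s := by
    intro s₀
    set T : ℝ := |s₀| + 1 with hT
    have hT0 : 0 < T := by positivity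
    set cl : ℝ → ℝ := fun t => min T (max (-T) t) with hcl
    have hclmem : ∀ t, |cl t| ≤ T := by
      intro t
      rw [abs_le]
      constructor
      · exact le_min (by linarith) (le_max_left _ _)
      · exact min_le_left _ _
    set K : NNReal := ⟨c₀ + T, by positivity⟩ with hK
    have hv : ∀ t, LipschitzOnWith K (vf (c (cl t)) (τ (cl t))) Set.univ := by
      intro t
      refine (vf_lip _ _ K ?_).lipschitzOnWith
      have hcb : |c (cl t)| ≤ c₀ := by
        rw [hc]
        have he : Real.exp (-α * (cl t) ^ 2 / 4) ≤ 1 := by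
          rw [Real.exp_le_one_iff]
          have : 0 ≤ α * (cl t) ^ 2 := mul_nonneg hα.1 (sq_nonneg _)
          linarith
        have hpos : 0 < Real.exp (-α * (cl t) ^ 2 / 4) := Real.exp_pos _
        rw [abs_of_pos (by positivity)]
        nlinarith
      have hτb : |τ (cl t)| ≤ T := by
        rw [hτ]
        have hs : Real.sqrt (1 - α ^ 2) ≤ 1 :=
          Real.sqrt_le_one.mpr (by nlinarith [sq_nonneg α])
        have hs0 : 0 ≤ Real.sqrt (1 - α ^ 2) := Real.sqrt_nonneg _
        have := hclmem t
        rw [abs_div, abs_mul, abs_of_nonneg hs0]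
        have : Real.sqrt (1 - α ^ 2) * |cl t| ≤ 1 * T :=
          mul_le_mul hs (hclmem t) (abs_nonneg _) zero_le_one
        simp only [abs_two]
        linarith
      simp only [hK, NNReal.coe_mk]
      show |c (cl t)| + |τ (cl t)| ≤ c₀ + T
      linarith
    have hcleq : ∀ t ∈ Set.Ioo (-T) T, cl t = t := by
      intro t ht
      rw [hcl]
      simp only
      rw [max_eq_right ht.1.le, min_eq_right ht.2.le]
    have h0mem : (0:ℝ) ∈ Set.Ioo (-T) T := by
      constructor <;> [linarith; linarith]
    have := ODE_solution_unique_of_mem_Icc (v := fun t => vf (c (cl t)) (τ (cl t)))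
      (s := fun _ => Set.univ) (fun t _ => hv t) h0mem hPcont.continuousOn
      (fun t ht => by show HasDerivAt P (vf (c (cl t)) (τ (cl t)) (P t)) t; rw [hcleq t ht]; exact hP' t)
      (fun t ht => Set.mem_univ _) hQcont.continuousOn
      (fun t ht => by show HasDerivAt Q (vf (c (cl t)) (τ (cl t)) (Q t)) t; rw [hcleq t ht]; exact hQ' t)
      (fun t ht => Set.mem_univ _) heq0
    exact this ⟨by simp [hT]; nlinarith [abs_nonneg s₀, neg_abs_le s₀], by
      simp [hT]; nlinarith [le_abs_self s₀]⟩
  -- extract the componentwise statements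
  intro s
  have hk := key s
  simp only [hP, hQ, Prod.mk.injEq] at hk
  obtain ⟨h1, h2, h3⟩ := hk
  have e1 := fun i => congrFun h1 i
  have e2 := fun i => congrFun h2 i
  have e3 := fun i => congrFun h3 i
  simp only [Aflip_apply, Pi.neg_apply] at e1 e2 e3
  have s0 : sgn3 0 = 1 := rfl
  have s1 : sgn3 1 = -1 := rfl
  have s2 : sgn3 2 = -1 := rfl
  refine ⟨?_, ?_, ?_, ?_, ?_, ?_, ?_, ?_, ?_⟩
  · have := e1 0; rw [s0] at this; linarith
  · have := e1 1; rw [s1] at this; linarith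
  · have := e1 2; rw [s2] at this; linarith
  · have := e2 0; rw [s0] at this; linarith
  · have := e2 1; rw [s1] at this; linarith
  · have := e2 2; rw [s2] at this; linarith
  · have := e3 0; rw [s0] at this; linarith
  · have := e3 1; rw [s1] at this; linarith
  · have := e3 2; rw [s2] at this; linarith
end

section
/- Let c₀>0, α∈(0,1], β=√(1−α²), let m,n,b:ℝ→ℝ³ solve the self-similar profile system, and let A⁺=(A₁⁺,A₂⁺,A₃⁺)∈ℝ³ be the limit of m(s) as s→+∞. Then the following inequalities hold: |A₁⁺ − 1| ≤ (c₀²π/α)·(1 + c₀²π/(8α)); |A₂⁺ − c₀√(π(1+α))/√2| ≤ c₀²π/4 + (c₀²π/(α√2))·(1 + c₀²π/8 + c₀√(π(1+α))/(2√2)) + (c₀²π/(2√2·α))²; and |A₃⁺ − c₀√(π(1−α))/√2| ≤ c₀²π/4 + (c₀²π/(α√2))·(1 + c₀²π/8 + c₀√(π(1−α))/(2√2)) + (c₀²π/(2√2·α))². -/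
open Real Filter MeasureTheory intervalIntegral Set

set_option maxHeartbeats 1000000

/-- dot product on `Fin 3 → ℝ` -/
def dt3 (x y : Fin 3 → ℝ) : ℝ := x 0 * y 0 + x 1 * y 1 + x 2 * y 2

lemma gron_aux (c t c₀ S u v w p q r : ℝ) (hc0 : 0 ≤ c) (hc1 : c ≤ c₀) (ht0 : 0 ≤ t)
    (ht1 : t ≤ S / 2) :
    |2 * c * p * (u - v) + 2 * t * q * (v - w)| ≤
      2 * (c₀ + S / 2) * (u ^ 2 + v ^ 2 + w ^ 2 + p ^ 2 + q ^ 2 + r ^ 2) + 0 := by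
  rw [abs_le]
  constructor <;>
  nlinarith [mul_nonneg hc0 (sq_nonneg (p + u)), mul_nonneg hc0 (sq_nonneg (p - u)),
    mul_nonneg hc0 (sq_nonneg (p + v)), mul_nonneg hc0 (sq_nonneg (p - v)),
    mul_nonneg ht0 (sq_nonneg (q + v)), mul_nonneg ht0 (sq_nonneg (q - v)),
    mul_nonneg ht0 (sq_nonneg (q + w)), mul_nonneg ht0 (sq_nonneg (q - w)),
    mul_nonneg hc0 (sq_nonneg u), mul_nonneg hc0 (sq_nonneg v), mul_nonneg hc0 (sq_nonneg w),
    mul_nonneg hc0 (sq_nonneg p), mul_nonneg hc0 (sq_nonneg q), mul_nonneg hc0 (sq_nonneg r),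
    mul_nonneg ht0 (sq_nonneg u), mul_nonneg ht0 (sq_nonneg v), mul_nonneg ht0 (sq_nonneg w),
    mul_nonneg ht0 (sq_nonneg p), mul_nonneg ht0 (sq_nonneg q), mul_nonneg ht0 (sq_nonneg r),
    mul_nonneg (sub_nonneg.2 hc1) (by positivity : (0:ℝ) ≤ u ^ 2 + v ^ 2 + w ^ 2 + p ^ 2 + q ^ 2 + r ^ 2),
    mul_nonneg (sub_nonneg.2 ht1) (by positivity : (0:ℝ) ≤ u ^ 2 + v ^ 2 + w ^ 2 + p ^ 2 + q ^ 2 + r ^ 2)]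

lemma frame_orthonormal (c₀ α : ℝ) (hc₀ : 0 < c₀) (hα : α ∈ Set.Ioc (0:ℝ) 1)
    (m n b : ℝ → Fin 3 → ℝ) (h : ProfileSystem c₀ α m n b) :
    ∀ s : ℝ, 0 ≤ s → dt3 (m s) (m s) = 1 ∧ dt3 (n s) (n s) = 1 ∧ dt3 (b s) (b s) = 1 := by
  set c : ℝ → ℝ := fun s => c₀ * Real.exp (-α * s ^ 2 / 4) with hc
  set τ : ℝ → ℝ := fun s => Real.sqrt (1 - α ^ 2) * s / 2 with hτ
  obtain ⟨hSF, hm0, hn0, hb0⟩ := h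
  have hmi : ∀ s i, HasDerivAt (fun s => m s i) (c s * n s i) s := fun s i => by
    simpa [hc] using (hasDerivAt_pi.1 (hSF s).1 i)
  have hni : ∀ s i, HasDerivAt (fun s => n s i) (-c s * m s i + τ s * b s i) s := fun s i => by
    simpa [hc, hτ] using (hasDerivAt_pi.1 (hSF s).2.1 i)
  have hbi : ∀ s i, HasDerivAt (fun s => b s i) (-τ s * n s i) s := fun s i => by
    simpa [hτ] using (hasDerivAt_pi.1 (hSF s).2.2 i)
  set u : ℝ → ℝ := fun s => dt3 (m s) (m s) - 1 with hu
  set v : ℝ → ℝ := fun s => dt3 (n s) (n s) - 1 with hv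
  set w : ℝ → ℝ := fun s => dt3 (b s) (b s) - 1 with hw
  set p : ℝ → ℝ := fun s => dt3 (m s) (n s) with hp
  set q : ℝ → ℝ := fun s => dt3 (n s) (b s) with hq
  set r : ℝ → ℝ := fun s => dt3 (m s) (b s) with hr
  have hu' : ∀ s, HasDerivAt u (2 * c s * p s) s := by
    intro s
    have : HasDerivAt (fun s => dt3 (m s) (m s) - 1)
        ((c s * n s 0 * m s 0 + m s 0 * (c s * n s 0)) +
         (c s * n s 1 * m s 1 + m s 1 * (c s * n s 1)) +
         (c s * n s 2 * m s 2 + m s 2 * (c s * n s 2))) s := by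
      unfold dt3
      exact ((((hmi s 0).mul (hmi s 0)).add (((hmi s 1)).mul (hmi s 1))).add
        (((hmi s 2)).mul (hmi s 2))).sub_const 1
    convert this using 1
    simp only [hp, dt3]; ring
  have hv' : ∀ s, HasDerivAt v (-2 * c s * p s + 2 * τ s * q s) s := by
    intro s
    have : HasDerivAt (fun s => dt3 (n s) (n s) - 1)
        (((-c s * m s 0 + τ s * b s 0) * n s 0 + n s 0 * (-c s * m s 0 + τ s * b s 0)) +
         ((-c s * m s 1 + τ s * b s 1) * n s 1 + n s 1 * (-c s * m s 1 + τ s * b s 1)) +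
         ((-c s * m s 2 + τ s * b s 2) * n s 2 + n s 2 * (-c s * m s 2 + τ s * b s 2))) s := by
      unfold dt3
      exact ((((hni s 0).mul (hni s 0)).add (((hni s 1)).mul (hni s 1))).add
        (((hni s 2)).mul (hni s 2))).sub_const 1
    convert this using 1
    simp only [hp, hq, dt3]; ring
  have hw' : ∀ s, HasDerivAt w (-2 * τ s * q s) s := by
    intro s
    have : HasDerivAt (fun s => dt3 (b s) (b s) - 1)
        ((-τ s * n s 0 * b s 0 + b s 0 * (-τ s * n s 0)) +
         (-τ s * n s 1 * b s 1 + b s 1 * (-τ s * n s 1)) +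
         (-τ s * n s 2 * b s 2 + b s 2 * (-τ s * n s 2))) s := by
      unfold dt3
      exact ((((hbi s 0).mul (hbi s 0)).add (((hbi s 1)).mul (hbi s 1))).add
        (((hbi s 2)).mul (hbi s 2))).sub_const 1
    convert this using 1
    simp only [hq, dt3]; ring
  have hp' : ∀ s, HasDerivAt p (c s * (v s - u s) + τ s * r s) s := by
    intro s
    have : HasDerivAt (fun s => dt3 (m s) (n s))
        ((c s * n s 0 * n s 0 + m s 0 * (-c s * m s 0 + τ s * b s 0)) +
         (c s * n s 1 * n s 1 + m s 1 * (-c s * m s 1 + τ s * b s 1)) +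
         (c s * n s 2 * n s 2 + m s 2 * (-c s * m s 2 + τ s * b s 2))) s := by
      unfold dt3
      exact (((hmi s 0).mul (hni s 0)).add (((hmi s 1)).mul (hni s 1))).add
        (((hmi s 2)).mul (hni s 2))
    convert this using 1
    simp only [hu, hv, hr, dt3]; ring
  have hq' : ∀ s, HasDerivAt q (-c s * r s + τ s * (w s - v s)) s := by
    intro s
    have : HasDerivAt (fun s => dt3 (n s) (b s))
        (((-c s * m s 0 + τ s * b s 0) * b s 0 + n s 0 * (-τ s * n s 0)) +
         ((-c s * m s 1 + τ s * b s 1) * b s 1 + n s 1 * (-τ s * n s 1)) +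
         ((-c s * m s 2 + τ s * b s 2) * b s 2 + n s 2 * (-τ s * n s 2))) s := by
      unfold dt3
      exact (((hni s 0).mul (hbi s 0)).add (((hni s 1)).mul (hbi s 1))).add
        (((hni s 2)).mul (hbi s 2))
    convert this using 1
    simp only [hv, hw, hr, dt3]; ring
  have hr' : ∀ s, HasDerivAt r (c s * q s - τ s * p s) s := by
    intro s
    have : HasDerivAt (fun s => dt3 (m s) (b s))
        ((c s * n s 0 * b s 0 + m s 0 * (-τ s * n s 0)) +
         (c s * n s 1 * b s 1 + m s 1 * (-τ s * n s 1)) +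
         (c s * n s 2 * b s 2 + m s 2 * (-τ s * n s 2))) s := by
      unfold dt3
      exact (((hmi s 0).mul (hbi s 0)).add (((hmi s 1)).mul (hbi s 1))).add
        (((hmi s 2)).mul (hbi s 2))
    convert this using 1
    simp only [hp, hq, dt3]; ring
  set F : ℝ → ℝ := fun s => u s ^ 2 + v s ^ 2 + w s ^ 2 + p s ^ 2 + q s ^ 2 + r s ^ 2 with hF
  have hF' : ∀ s, HasDerivAt F (2 * c s * p s * (u s - v s) + 2 * τ s * q s * (v s - w s)) s := by
    intro s
    have : HasDerivAt F
        ((2 * u s ^ 1 * (2 * c s * p s)) + (2 * v s ^ 1 * (-2 * c s * p s + 2 * τ s * q s)) +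
         (2 * w s ^ 1 * (-2 * τ s * q s)) + (2 * p s ^ 1 * (c s * (v s - u s) + τ s * r s)) +
         (2 * q s ^ 1 * (-c s * r s + τ s * (w s - v s))) +
         (2 * r s ^ 1 * (c s * q s - τ s * p s))) s := by
      exact ((((((hu' s).pow 2).add ((hv' s).pow 2)).add ((hw' s).pow 2)).add
        ((hp' s).pow 2)).add ((hq' s).pow 2)).add ((hr' s).pow 2)
    convert this using 1
    ring
  -- initial values
  have hF0 : F 0 = 0 := by
    simp only [hF, hu, hv, hw, hp, hq, hr, dt3, hm0, hn0, hb0]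
    norm_num [Matrix.cons_val_zero, Matrix.cons_val_one, Matrix.head_cons, Matrix.cons_val_two, Matrix.tail_cons]
  have hFnonneg : ∀ s, 0 ≤ F s := by intro s; positivity
  -- Gronwall on [0, S]
  have key : ∀ S : ℝ, 0 ≤ S → F S = 0 := by
    intro S hS
    have hcb : ∀ s : ℝ, 0 ≤ c s ∧ c s ≤ c₀ := by
      intro s
      have h1 : Real.exp (-α * s ^ 2 / 4) ≤ 1 := by
        rw [Real.exp_le_one_iff]
        nlinarith [sq_nonneg s, hα.1]
      constructor
      · exact mul_nonneg hc₀.le (Real.exp_nonneg _)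
      · simp only [hc]
        nlinarith [h1, hc₀.le, Real.exp_nonneg (-α * s ^ 2 / 4)]
    have hτb : ∀ s ∈ Set.Icc (0:ℝ) S, 0 ≤ τ s ∧ τ s ≤ S / 2 := by
      intro s hs
      have hb0 : (0:ℝ) ≤ Real.sqrt (1 - α ^ 2) := Real.sqrt_nonneg _
      have hb1 : Real.sqrt (1 - α ^ 2) ≤ 1 :=
        Real.sqrt_le_one.mpr (by nlinarith [hα.1])
      constructor
      · exact div_nonneg (mul_nonneg hb0 hs.1) (by norm_num)
      · simp only [hτ]
        have : Real.sqrt (1 - α ^ 2) * s ≤ S := by nlinarith [hs.1, hs.2]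
        linarith
    have hcont : ContinuousOn F (Set.Icc 0 S) :=
      (fun s _ => (hF' s).continuousAt.continuousWithinAt)
    have := norm_le_gronwallBound_of_norm_deriv_right_le hcont
      (fun x _ => (hF' x).hasDerivWithinAt) (δ := 0) (K := 2 * (c₀ + S / 2)) (ε := 0)
      (by simp [hF0])
      (fun x hx => by
        have hcx := hcb x
        have hτx := hτb x ⟨hx.1, hx.2.le⟩
        have hFeq : F x = u x ^ 2 + v x ^ 2 + w x ^ 2 + p x ^ 2 + q x ^ 2 + r x ^ 2 := rfl
        rw [Real.norm_eq_abs, Real.norm_eq_abs, abs_of_nonneg (hFnonneg x), hFeq]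
        exact gron_aux _ _ _ _ _ _ _ _ _ (r x) hcx.1 hcx.2 hτx.1 hτx.2)
      S ⟨hS, le_refl S⟩
    rw [gronwallBound_ε0, zero_mul] at this
    simp only [Real.norm_eq_abs, abs_of_nonneg (hFnonneg S)] at this
    exact le_antisymm this (hFnonneg S)
  intro s hs
  have hFs := key s hs
  have sqzero : ∀ x : ℝ, x ^ 2 ≤ 0 → x = 0 := fun x hx =>
    pow_eq_zero_iff (n := 2) (by norm_num) |>.1 (le_antisymm hx (sq_nonneg x))
  have hFe : u s ^ 2 + v s ^ 2 + w s ^ 2 + p s ^ 2 + q s ^ 2 + r s ^ 2 = 0 := hFs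
  have h1 : u s = 0 ∧ v s = 0 ∧ w s = 0 := by
    refine ⟨sqzero _ ?_, sqzero _ ?_, sqzero _ ?_⟩ <;>
      nlinarith [sq_nonneg (u s), sq_nonneg (v s), sq_nonneg (w s), sq_nonneg (p s),
        sq_nonneg (q s), sq_nonneg (r s), hFe]
  refine ⟨?_, ?_, ?_⟩
  · have := h1.1; simp only [hu] at this; linarith
  · have := h1.2.1; simp only [hv] at this; linarith
  · have := h1.2.2; simp only [hw] at this; linarith

lemma comp_le_one_s5 (x : Fin 3 → ℝ) (hx : dt3 x x = 1) (j : Fin 3) : |x j| ≤ 1 := by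
  unfold dt3 at hx
  have hj : j = 0 ∨ j = 1 ∨ j = 2 := by omega
  rcases hj with hj | hj | hj <;> rw [hj, abs_le] <;> constructor <;>
    nlinarith [sq_nonneg (x 0), sq_nonneg (x 1), sq_nonneg (x 2)]

lemma key_est (c₀ α : ℝ) (hc₀ : 0 < c₀) (hα : α ∈ Set.Ioc (0:ℝ) 1)
    (m n b : ℝ → Fin 3 → ℝ) (h : ProfileSystem c₀ α m n b)
    (A : Fin 3 → ℝ) (hA : Tendsto m atTop (nhds A)) (i : Fin 3) :
    |A i - m 0 i - (((n 0 i : ℂ) + (b 0 i : ℂ) * Complex.I) *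
        ∫ s in Set.Ioi (0:ℝ), (c₀ : ℂ) *
          Complex.exp (-(((α : ℂ) + (Real.sqrt (1 - α ^ 2) : ℂ) * Complex.I) / 4) * (s : ℂ) ^ 2)).re|
      ≤ c₀ ^ 2 * Real.pi / (2 * α) := by
  have hfr := frame_orthonormal c₀ α hc₀ hα m n b h
  obtain ⟨hSF, hm0, hn0, hb0⟩ := h
  set β : ℝ := Real.sqrt (1 - α ^ 2) with hβ
  have hβ0 : 0 ≤ β := Real.sqrt_nonneg _
  set c : ℝ → ℝ := fun s => c₀ * Real.exp (-α * s ^ 2 / 4) with hc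
  set τ : ℝ → ℝ := fun s => β * s / 2 with hτ
  set θ : ℝ → ℝ := fun s => β * s ^ 2 / 4 with hθ
  have hmi : ∀ s i, HasDerivAt (fun s => m s i) (c s * n s i) s := fun s i => by
    simpa [hc] using (hasDerivAt_pi.1 (hSF s).1 i)
  have hni : ∀ s i, HasDerivAt (fun s => n s i) (-c s * m s i + τ s * b s i) s := fun s i => by
    simpa [hc, hτ, hβ] using (hasDerivAt_pi.1 (hSF s).2.1 i)
  have hbi : ∀ s i, HasDerivAt (fun s => b s i) (-τ s * n s i) s := fun s i => by
    simpa [hτ, hβ] using (hasDerivAt_pi.1 (hSF s).2.2 i)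
  have hm_cont : ∀ j, Continuous fun s => m s j := fun j =>
    Differentiable.continuous (fun s => (hmi s j).differentiableAt)
  have hn_cont : ∀ j, Continuous fun s => n s j := fun j =>
    Differentiable.continuous (fun s => (hni s j).differentiableAt)
  have hb_cont : ∀ j, Continuous fun s => b s j := fun j =>
    Differentiable.continuous (fun s => (hbi s j).differentiableAt)
  have hc_cont : Continuous c := by
    apply Continuous.mul continuous_const
    exact Real.continuous_exp.comp (by continuity)
  have hθ_cont : Continuous θ := by continuity
  have hc_nonneg : ∀ s, 0 ≤ c s := fun s => mul_nonneg hc₀.le (Real.exp_nonneg _)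
  have hc_le : ∀ s, c s ≤ c₀ := by
    intro s
    have h1 : Real.exp (-α * s ^ 2 / 4) ≤ 1 := by
      rw [Real.exp_le_one_iff]
      nlinarith [sq_nonneg s, hα.1]
    simp only [hc]
    nlinarith [h1, hc₀.le, Real.exp_nonneg (-α * s ^ 2 / 4)]
  -- ψ and its derivative
  set ψ : ℝ → ℂ := fun s => ((n s i : ℂ) + (b s i : ℂ) * Complex.I) *
      Complex.exp ((θ s : ℂ) * Complex.I) with hψ
  have hθd : ∀ s, HasDerivAt θ (τ s) s := by
    intro s
    have h1 : HasDerivAt (fun s : ℝ => β * s ^ 2 / 4) (β * (2 * s ^ 1) / 4) s :=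
      ((hasDerivAt_pow 2 s).const_mul β).div_const 4
    convert h1 using 1
    simp only [hτ]; ring
  have hψ' : ∀ s, HasDerivAt ψ
      (((-(c s * m s i) : ℝ) : ℂ) * Complex.exp ((θ s : ℂ) * Complex.I)) s := by
    intro s
    have h1 := (hni s i).ofReal_comp
    have h2 := ((hbi s i).ofReal_comp).mul_const Complex.I
    have h3 : HasDerivAt (fun sm => ((θ sm : ℝ) : ℂ) * Complex.I)
        (((τ s : ℝ) : ℂ) * Complex.I) s := ((hθd s).ofReal_comp).mul_const _
    have h4 := h3.cexp
    have h5 := (h1.add h2).mul h4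
    convert h5 using 1
    · rfl
    · rfl
    have hI2 := Complex.I_sq
    change ((-(c s * m s i) : ℝ) : ℂ) * Complex.exp ((θ s : ℂ) * Complex.I) =
      (((-c s * m s i + τ s * b s i : ℝ) : ℂ) + ((-τ s * n s i : ℝ) : ℂ) * Complex.I) *
          Complex.exp ((θ s : ℂ) * Complex.I) +
        ((n s i : ℂ) + (b s i : ℂ) * Complex.I) *
          (Complex.exp ((θ s : ℂ) * Complex.I) * ((τ s : ℂ) * Complex.I))
    push_cast
    linear_combination (-((τ s : ℂ) * (b s i : ℂ) * Complex.exp ((θ s : ℂ) * Complex.I))) * hI2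
  -- FTC for ψ
  have hψd_cont : Continuous fun s => ((-(c s * m s i) : ℝ) : ℂ) *
      Complex.exp ((θ s : ℂ) * Complex.I) := by
    apply Continuous.mul
    · exact Complex.continuous_ofReal.comp ((hc_cont.mul (hm_cont i)).neg)
    · exact Complex.continuous_exp.comp
        ((Complex.continuous_ofReal.comp hθ_cont).mul continuous_const)
  have hprod_cont : Continuous fun s => ((c s * m s i : ℝ) : ℂ) *
      Complex.exp ((θ s : ℂ) * Complex.I) := by
    apply Continuous.mul
    · exact Complex.continuous_ofReal.comp (hc_cont.mul (hm_cont i))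
    · exact Complex.continuous_exp.comp
        ((Complex.continuous_ofReal.comp hθ_cont).mul continuous_const)
  have hψFTC : ∀ S : ℝ, ψ 0 - ψ S =
      ∫ σ in (0:ℝ)..S, ((c σ * m σ i : ℝ) : ℂ) * Complex.exp ((θ σ : ℂ) * Complex.I) := by
    intro S
    have h1 : ∫ σ in (0:ℝ)..S, ((-(c σ * m σ i) : ℝ) : ℂ) * Complex.exp ((θ σ : ℂ) * Complex.I)
        = ψ S - ψ 0 :=
      intervalIntegral.integral_eq_sub_of_hasDerivAt (fun σ _ => hψ' σ)
        (hψd_cont.intervalIntegrable _ _)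
    have h2 : (fun σ => ((-(c σ * m σ i) : ℝ) : ℂ) * Complex.exp ((θ σ : ℂ) * Complex.I))
        = fun σ => -(((c σ * m σ i : ℝ) : ℂ) * Complex.exp ((θ σ : ℂ) * Complex.I)) := by
      funext σ; push_cast; ring
    rw [h2, intervalIntegral.integral_neg] at h1
    linear_combination h1
  -- the complex Gaussian integrand
  set g : ℝ → ℂ := fun s => ((c s : ℝ) : ℂ) * Complex.exp (-((θ s : ℂ) * Complex.I)) with hg
  have hg_eq : ∀ s : ℝ, g s =
      (c₀ : ℂ) * Complex.exp (-(((α : ℂ) + (β : ℂ) * Complex.I) / 4) * (s : ℂ) ^ 2) := by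
    intro s
    simp only [hg, hc]
    rw [Complex.ofReal_mul, Complex.ofReal_exp, mul_assoc, ← Complex.exp_add]
    congr 1
    simp only [hθ]
    push_cast
    ring
  have hg_cont : Continuous g := by
    apply Continuous.mul (Complex.continuous_ofReal.comp hc_cont)
    exact Complex.continuous_exp.comp
      (((Complex.continuous_ofReal.comp hθ_cont).mul continuous_const).neg)
  have hψ_cont : Continuous ψ := by
    apply Continuous.mul
    · exact (Complex.continuous_ofReal.comp (hn_cont i)).add
        ((Complex.continuous_ofReal.comp (hb_cont i)).mul continuous_const)
    · exact Complex.continuous_exp.comp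
        ((Complex.continuous_ofReal.comp hθ_cont).mul continuous_const)
  have hbC : (0:ℝ) < ((((α : ℂ) + (β : ℂ) * Complex.I) / 4)).re := by
    rw [show ((4:ℂ)) = ((4:ℝ):ℂ) by norm_num, Complex.div_ofReal_re]
    simp only [Complex.add_re, Complex.ofReal_re, Complex.mul_re, Complex.I_re, Complex.I_im,
      Complex.ofReal_im]
    nlinarith [hα.1]
  have hgInt : MeasureTheory.IntegrableOn
      (fun s : ℝ => (c₀ : ℂ) * Complex.exp (-(((α : ℂ) + (β : ℂ) * Complex.I) / 4) * (s:ℂ) ^ 2))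
      (Set.Ioi 0) :=
    ((integrable_cexp_neg_mul_sq hbC).const_mul (c₀:ℂ)).integrableOn
  set G : ℂ := ∫ s in Set.Ioi (0:ℝ),
      (c₀ : ℂ) * Complex.exp (-(((α : ℂ) + (β : ℂ) * Complex.I) / 4) * (s : ℂ) ^ 2) with hG
  have hGtend : Tendsto (fun S => ∫ s in (0:ℝ)..S, g s) atTop (nhds G) := by
    have h1 := intervalIntegral_tendsto_integral_Ioi (0:ℝ) hgInt tendsto_id
    simp only [hg_eq]
    exact h1
  -- the primitive of c
  set Cf : ℝ → ℝ := fun s => ∫ σ in (0:ℝ)..s, c σ with hCf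
  have hCf_deriv : ∀ s, HasDerivAt Cf (c s) s := fun s =>
    (hc_cont.integral_hasStrictDerivAt 0 s).hasDerivAt
  have hCf_cont : Continuous Cf :=
    Differentiable.continuous (fun s => (hCf_deriv s).differentiableAt)
  have hα4 : (0:ℝ) < α / 4 := by have := hα.1; positivity
  have hc_eq : ∀ σ : ℝ, c σ = c₀ * Real.exp (-(α/4) * σ ^ 2) := fun σ => by
    simp only [hc]; ring_nf
  have hcInt : MeasureTheory.IntegrableOn c (Set.Ioi (0:ℝ)) := by
    rw [show c = (fun σ : ℝ => c₀ * Real.exp (-(α/4) * σ ^ 2)) from funext hc_eq]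
    exact ((integrable_exp_neg_mul_sq hα4).const_mul c₀).integrableOn
  have hIoi : ∫ σ in Set.Ioi (0:ℝ), c σ = c₀ * Real.sqrt (Real.pi / α) := by
    simp only [hc_eq]
    rw [MeasureTheory.integral_const_mul, integral_gaussian_Ioi]
    congr 1
    rw [show Real.pi / (α/4) = 4 * (Real.pi / α) by field_simp,
      Real.sqrt_mul (by norm_num : (0:ℝ) ≤ 4),
      show Real.sqrt 4 = 2 by
        rw [show (4:ℝ) = 2 ^ 2 by norm_num, Real.sqrt_sq (by norm_num : (0:ℝ) ≤ 2)]]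
    ring
  have hCf_nonneg : ∀ s, 0 ≤ s → 0 ≤ Cf s := fun s hs =>
    intervalIntegral.integral_nonneg hs (fun σ _ => hc_nonneg σ)
  have hCf_le : ∀ s, 0 ≤ s → Cf s ≤ c₀ * Real.sqrt (Real.pi / α) := by
    intro s hs
    rw [← hIoi]
    have h1 : Cf s = ∫ σ in Set.Ioc (0:ℝ) s, c σ := intervalIntegral.integral_of_le hs
    rw [h1]
    exact MeasureTheory.setIntegral_mono_set hcInt
      (Filter.Eventually.of_forall (fun σ => hc_nonneg σ))
      (HasSubset.Subset.eventuallyLE Set.Ioc_subset_Ioi_self)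
  -- bound on ψ 0 - ψ s
  have hEbound : ∀ s, 0 ≤ s → ‖ψ 0 - ψ s‖ ≤ Cf s := by
    intro s hs
    rw [hψFTC s]
    refine (intervalIntegral.norm_integral_le_integral_norm hs).trans ?_
    refine intervalIntegral.integral_mono_on hs
      (hprod_cont.norm.intervalIntegrable _ _) (hc_cont.intervalIntegrable _ _) ?_
    intro σ hσ
    rw [norm_mul, Complex.norm_exp_ofReal_mul_I, mul_one, Complex.norm_real, Real.norm_eq_abs,
      abs_mul, abs_of_nonneg (hc_nonneg σ)]
    have hm1 : |m σ i| ≤ 1 := comp_le_one_s5 (m σ) (hfr σ hσ.1).1 i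
    nlinarith [hc_nonneg σ, abs_nonneg (m σ i)]
  set ψ0 : ℂ := (n 0 i : ℂ) + (b 0 i : ℂ) * Complex.I with hψ0def
  have hψ0 : ψ 0 = ψ0 := by
    simp [hψ, hθ, hψ0def]
  -- main estimate at finite S
  have hmain : ∀ S, 0 ≤ S →
      |m S i - m 0 i - (ψ0 * ∫ s in (0:ℝ)..S, g s).re| ≤ c₀ ^ 2 * Real.pi / (2 * α) := by
    intro S hS
    have hmFTC : ∫ σ in (0:ℝ)..S, c σ * n σ i = m S i - m 0 i :=
      intervalIntegral.integral_eq_sub_of_hasDerivAt (fun σ _ => hmi σ i)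
        ((hc_cont.mul (hn_cont i)).intervalIntegrable _ _)
    have hpt : ∀ σ, c σ * n σ i = (g σ * ψ σ).re := by
      intro σ
      have h1 : g σ * ψ σ = (c σ : ℂ) * ((n σ i : ℂ) + (b σ i : ℂ) * Complex.I) := by
        simp only [hg, hψ]
        have h2 : Complex.exp (-((θ σ : ℂ) * Complex.I)) * Complex.exp ((θ σ : ℂ) * Complex.I)
            = 1 := by
          rw [← Complex.exp_add]; ring_nf; exact Complex.exp_zero
        calc ((c σ : ℝ) : ℂ) * Complex.exp (-((θ σ : ℂ) * Complex.I)) *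
              (((n σ i : ℂ) + (b σ i : ℂ) * Complex.I) * Complex.exp ((θ σ : ℂ) * Complex.I))
            = ((c σ : ℝ) : ℂ) * ((n σ i : ℂ) + (b σ i : ℂ) * Complex.I) *
              (Complex.exp (-((θ σ : ℂ) * Complex.I)) * Complex.exp ((θ σ : ℂ) * Complex.I)) := by
              ring
          _ = _ := by rw [h2, mul_one]
      rw [h1]
      simp [Complex.mul_re, Complex.add_re, Complex.add_im, Complex.mul_im]
    have hint1 : IntervalIntegrable (fun σ => g σ * ψ σ) MeasureTheory.volume 0 S :=
      (hg_cont.mul hψ_cont).intervalIntegrable _ _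
    have h3 : m S i - m 0 i = (∫ σ in (0:ℝ)..S, g σ * ψ σ).re := by
      rw [← hmFTC]
      have := ContinuousLinearMap.intervalIntegral_comp_comm Complex.reCLM hint1
      simp only [Complex.reCLM_apply] at this
      rw [← this]
      exact intervalIntegral.integral_congr (fun σ _ => hpt σ)
    have h4 : ∫ σ in (0:ℝ)..S, g σ * ψ σ =
        (∫ σ in (0:ℝ)..S, g σ) * ψ0 - ∫ σ in (0:ℝ)..S, g σ * (ψ 0 - ψ σ) := by
      rw [← intervalIntegral.integral_mul_const, ← intervalIntegral.integral_sub (f := fun σ => g σ * ψ0) (g := fun σ => g σ * (ψ 0 - ψ σ))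
        ((hg_cont.mul continuous_const).intervalIntegrable _ _)
        ((hg_cont.mul (continuous_const.sub hψ_cont)).intervalIntegrable _ _)]
      refine intervalIntegral.integral_congr (fun σ _ => ?_)
      rw [← hψ0]; ring
    have h5 : m S i - m 0 i - (ψ0 * ∫ s in (0:ℝ)..S, g s).re
        = -(∫ σ in (0:ℝ)..S, g σ * (ψ 0 - ψ σ)).re := by
      rw [h3, h4, Complex.sub_re, mul_comm ψ0]
      ring
    rw [h5, abs_neg]
    have h6 : |(∫ σ in (0:ℝ)..S, g σ * (ψ 0 - ψ σ)).re|
        ≤ ‖∫ σ in (0:ℝ)..S, g σ * (ψ 0 - ψ σ)‖ := Complex.abs_re_le_norm _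
    refine h6.trans ?_
    refine (intervalIntegral.norm_integral_le_integral_norm hS).trans ?_
    have h7 : ∫ σ in (0:ℝ)..S, ‖g σ * (ψ 0 - ψ σ)‖ ≤ ∫ σ in (0:ℝ)..S, c σ * Cf σ := by
      refine intervalIntegral.integral_mono_on hS
        ((hg_cont.mul (continuous_const.sub hψ_cont)).norm.intervalIntegrable _ _)
        ((hc_cont.mul hCf_cont).intervalIntegrable _ _) ?_
      intro σ hσ
      rw [norm_mul]
      have hgn : ‖g σ‖ = c σ := by
        simp only [hg]
        rw [show -((θ σ : ℂ) * Complex.I) = ((-θ σ : ℝ) : ℂ) * Complex.I by push_cast; ring]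
        rw [norm_mul, Complex.norm_exp_ofReal_mul_I, mul_one, Complex.norm_real,
          Real.norm_eq_abs, abs_of_nonneg (hc_nonneg σ)]
      rw [hgn]
      exact mul_le_mul_of_nonneg_left (hEbound σ hσ.1) (hc_nonneg σ)
    refine h7.trans ?_
    have hder : ∀ σ : ℝ, HasDerivAt (fun s => Cf s ^ 2 / 2) (c σ * Cf σ) σ := by
      intro σ
      have h8 := ((hCf_deriv σ).pow 2).div_const 2
      exact h8.congr_deriv (by ring)
    have h9 : ∫ σ in (0:ℝ)..S, c σ * Cf σ = Cf S ^ 2 / 2 - Cf 0 ^ 2 / 2 :=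
      intervalIntegral.integral_eq_sub_of_hasDerivAt (fun σ _ => hder σ)
        ((hc_cont.mul hCf_cont).intervalIntegrable _ _)
    have hCf0 : Cf 0 = 0 := intervalIntegral.integral_same
    rw [h9, hCf0]
    have h10 := hCf_le S hS
    have h11 := hCf_nonneg S hS
    have h12 : Real.sqrt (Real.pi / α) ^ 2 = Real.pi / α :=
      Real.sq_sqrt (le_of_lt (div_pos Real.pi_pos hα.1))
    have hπ := Real.pi_pos
    have hα1 := hα.1
    rw [show c₀ ^ 2 * Real.pi / (2 * α) = (c₀ ^ 2 * (Real.pi / α)) / 2 by field_simp]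
    nlinarith [sq_nonneg (Cf S), Real.sqrt_nonneg (Real.pi / α)]
  -- pass to the limit
  have hmit : Tendsto (fun S => m S i) atTop (nhds (A i)) :=
    ((continuous_apply i).tendsto A).comp hA
  have hre : Tendsto (fun S => (ψ0 * ∫ σ in (0:ℝ)..S, g σ).re) atTop (nhds ((ψ0 * G).re)) :=
    (Complex.continuous_re.tendsto _).comp (hGtend.const_mul ψ0)
  have hT : Tendsto (fun S => |m S i - m 0 i - (ψ0 * ∫ σ in (0:ℝ)..S, g σ).re|) atTop
      (nhds (|A i - m 0 i - (ψ0 * G).re|)) :=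
    (((hmit.sub_const (m 0 i)).sub hre)).abs
  exact le_of_tendsto hT (Filter.eventually_atTop.2 ⟨0, fun S hS => hmain S hS⟩)

lemma G_val (c₀ α : ℝ) (hα : α ∈ Set.Ioc (0:ℝ) 1) :
    (∫ s in Set.Ioi (0:ℝ), (c₀ : ℂ) *
        Complex.exp (-(((α : ℂ) + (Real.sqrt (1 - α ^ 2) : ℂ) * Complex.I) / 4) * (s : ℂ) ^ 2))
      = (c₀ : ℂ) * (((Real.sqrt (Real.pi * (1 + α)) / Real.sqrt 2 : ℝ) : ℂ)
          - ((Real.sqrt (Real.pi * (1 - α)) / Real.sqrt 2 : ℝ) : ℂ) * Complex.I) := by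
  set β := Real.sqrt (1 - α ^ 2) with hβ
  set X := Real.sqrt (Real.pi * (1 + α)) / Real.sqrt 2 with hX
  set Y := Real.sqrt (Real.pi * (1 - α)) / Real.sqrt 2 with hY
  have h2 : (Real.sqrt 2) ^ 2 = 2 := Real.sq_sqrt (by norm_num)
  have hα0 := hα.1
  have hα1 := hα.2
  have hπ := Real.pi_pos
  have hX2 : X ^ 2 = Real.pi * (1 + α) / 2 := by
    rw [hX, div_pow, Real.sq_sqrt (by nlinarith), h2]
  have hY2 : Y ^ 2 = Real.pi * (1 - α) / 2 := by
    rw [hY, div_pow, Real.sq_sqrt (by nlinarith), h2]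
  have hβ2 : β ^ 2 = 1 - α ^ 2 := Real.sq_sqrt (by nlinarith)
  have hXY : X * Y = Real.pi * β / 2 := by
    rw [hX, hY, div_mul_div_comm, Real.mul_self_sqrt (by norm_num : (0:ℝ) ≤ 2),
      ← Real.sqrt_mul (by nlinarith : (0:ℝ) ≤ Real.pi * (1 + α)),
      show Real.pi * (1 + α) * (Real.pi * (1 - α)) = Real.pi ^ 2 * (1 - α ^ 2) by ring,
      Real.sqrt_mul (sq_nonneg Real.pi), Real.sqrt_sq hπ.le, hβ]
  have hbC : (0:ℝ) < ((((α : ℂ) + (β : ℂ) * Complex.I) / 4)).re := by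
    rw [show ((4:ℂ)) = ((4:ℝ):ℂ) by norm_num, Complex.div_ofReal_re]
    simp only [Complex.add_re, Complex.ofReal_re, Complex.mul_re, Complex.I_re, Complex.I_im,
      Complex.ofReal_im]
    nlinarith [hα.1]
  have hbne : (((α : ℂ) + (β : ℂ) * Complex.I) / 4) ≠ 0 := by
    intro h0
    rw [h0] at hbC
    simp at hbC
  rw [MeasureTheory.integral_const_mul, integral_gaussian_complex_Ioi hbC]
  congr 1
  have hX2c : ((X:ℝ):ℂ) ^ 2 = (Real.pi : ℂ) * (1 + (α:ℂ)) / 2 := by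
    rw [← Complex.ofReal_pow, hX2]; push_cast; ring
  have hY2c : ((Y:ℝ):ℂ) ^ 2 = (Real.pi : ℂ) * (1 - (α:ℂ)) / 2 := by
    rw [← Complex.ofReal_pow, hY2]; push_cast; ring
  have hXYc : ((X:ℝ):ℂ) * ((Y:ℝ):ℂ) = (Real.pi : ℂ) * (β:ℂ) / 2 := by
    rw [← Complex.ofReal_mul, hXY]; push_cast; ring
  have hβ2c : ((β:ℝ):ℂ) ^ 2 = 1 - (α:ℂ) ^ 2 := by
    rw [← Complex.ofReal_pow, hβ2]; push_cast; ring
  have hI2 := Complex.I_sq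
  have hw2 : ((2:ℂ) * (((X:ℝ):ℂ) - ((Y:ℝ):ℂ) * Complex.I)) ^ (2:ℕ)
      = (Real.pi : ℂ) / (((α:ℂ) + (β:ℂ) * Complex.I) / 4) := by
    rw [eq_div_iff hbne]
    linear_combination (((α:ℂ) + (β:ℂ) * Complex.I)) * hX2c
      + (Complex.I ^ 2 * ((α:ℂ) + (β:ℂ) * Complex.I)) * hY2c
      + (-2 * Complex.I * ((α:ℂ) + (β:ℂ) * Complex.I)) * hXYc
      + (Real.pi : ℂ) * hβ2c
      + ((Real.pi : ℂ) * (((α:ℂ) + (β:ℂ) * Complex.I) * (1 - (α:ℂ)) / 2 - ((β:ℝ):ℂ) ^ 2)) * hI2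
  have hXpos : 0 < X :=
    div_pos (Real.sqrt_pos.2 (by nlinarith)) (Real.sqrt_pos.2 (by norm_num))
  have hre : (0:ℝ) < ((2:ℂ) * (((X:ℝ):ℂ) - ((Y:ℝ):ℂ) * Complex.I)).re := by
    simp only [Complex.mul_re, Complex.sub_re, Complex.sub_im, Complex.ofReal_re,
      Complex.ofReal_im, Complex.mul_re, Complex.I_re, Complex.I_im, Complex.mul_im]
    norm_num
    linarith
  rw [← hw2, show (1/2 : ℂ) = (2⁻¹ : ℂ) by norm_num, Complex.sq_cpow_two_inv hre,
    mul_comm (2:ℂ), mul_div_assoc]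
  norm_num

/-- Estimates for the limit vector `A⁺` of the profile `m`
in terms of `c₀` and `α ∈ (0,1]`. -/
theorem limit_vector_estimates (c₀ α : ℝ) (hc₀ : 0 < c₀)
    (hα : α ∈ Set.Ioc (0 : ℝ) 1)
    (m n b : ℝ → Fin 3 → ℝ) (h : ProfileSystem c₀ α m n b)
    (A : Fin 3 → ℝ) (hA : Tendsto m atTop (nhds A)) :
    |A 0 - 1| ≤ c₀ ^ 2 * Real.pi / α * (1 + c₀ ^ 2 * Real.pi / (8 * α)) ∧
    |A 1 - c₀ * Real.sqrt (Real.pi * (1 + α)) / Real.sqrt 2|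
      ≤ c₀ ^ 2 * Real.pi / 4
        + c₀ ^ 2 * Real.pi / (α * Real.sqrt 2)
          * (1 + c₀ ^ 2 * Real.pi / 8
              + c₀ * Real.sqrt (Real.pi * (1 + α)) / (2 * Real.sqrt 2))
        + (c₀ ^ 2 * Real.pi / (2 * Real.sqrt 2 * α)) ^ 2 ∧
    |A 2 - c₀ * Real.sqrt (Real.pi * (1 - α)) / Real.sqrt 2|
      ≤ c₀ ^ 2 * Real.pi / 4
        + c₀ ^ 2 * Real.pi / (α * Real.sqrt 2)
          * (1 + c₀ ^ 2 * Real.pi / 8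
              + c₀ * Real.sqrt (Real.pi * (1 - α)) / (2 * Real.sqrt 2))
        + (c₀ ^ 2 * Real.pi / (2 * Real.sqrt 2 * α)) ^ 2 := by
  have hπ := Real.pi_pos
  have hα0 := hα.1
  have h2le : Real.sqrt 2 ≤ 2 := by
    nlinarith [Real.sq_sqrt (by norm_num : (0:ℝ) ≤ 2), Real.sqrt_nonneg 2]
  have h2pos : (0:ℝ) < Real.sqrt 2 := Real.sqrt_pos.2 (by norm_num)
  have k0 := key_est c₀ α hc₀ hα m n b h A hA 0
  have k1 := key_est c₀ α hc₀ hα m n b h A hA 1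
  have k2 := key_est c₀ α hc₀ hα m n b h A hA 2
  rw [G_val c₀ α hα] at k0 k1 k2
  rw [h.2.1, h.2.2.1, h.2.2.2] at k0 k1 k2
  norm_num [Complex.mul_re, Complex.sub_re, Complex.sub_im, Complex.ofReal_re,
    Complex.ofReal_im, Complex.mul_im, Complex.I_re, Complex.I_im, Complex.add_re,
    Complex.add_im, Matrix.cons_val_two, Matrix.tail_cons] at k0 k1 k2
  refine ⟨?_, ?_, ?_⟩
  · refine k0.trans ?_
    have e1 : c₀ ^ 2 * Real.pi / (2 * α) ≤ c₀ ^ 2 * Real.pi / α :=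
      div_le_div_of_nonneg_left (by positivity) hα0 (by linarith)
    have e2 : c₀ ^ 2 * Real.pi / α ≤ c₀ ^ 2 * Real.pi / α * (1 + c₀ ^ 2 * Real.pi / (8 * α)) :=
      le_mul_of_one_le_right (by positivity)
        (by linarith [show (0:ℝ) ≤ c₀ ^ 2 * Real.pi / (8 * α) by positivity])
    linarith
  · rw [mul_div_assoc]
    refine k1.trans ?_
    have e1 : c₀ ^ 2 * Real.pi / (2 * α) ≤ c₀ ^ 2 * Real.pi / (α * Real.sqrt 2) :=
      div_le_div_of_nonneg_left (by positivity) (by positivity) (by nlinarith)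
    have e2 : c₀ ^ 2 * Real.pi / (α * Real.sqrt 2) ≤ c₀ ^ 2 * Real.pi / (α * Real.sqrt 2)
        * (1 + c₀ ^ 2 * Real.pi / 8 + c₀ * Real.sqrt (Real.pi * (1 + α)) / (2 * Real.sqrt 2)) :=
      le_mul_of_one_le_right (by positivity)
        (by
          have := show (0:ℝ) ≤ c₀ ^ 2 * Real.pi / 8 by positivity
          have := show (0:ℝ) ≤ c₀ * Real.sqrt (Real.pi * (1 + α)) / (2 * Real.sqrt 2) by positivity
          linarith)
    have e3 : (0:ℝ) ≤ c₀ ^ 2 * Real.pi / 4 := by positivity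
    have e4 : (0:ℝ) ≤ (c₀ ^ 2 * Real.pi / (2 * Real.sqrt 2 * α)) ^ 2 := by positivity
    linarith
  · rw [mul_div_assoc]
    refine k2.trans ?_
    have e1 : c₀ ^ 2 * Real.pi / (2 * α) ≤ c₀ ^ 2 * Real.pi / (α * Real.sqrt 2) :=
      div_le_div_of_nonneg_left (by positivity) (by positivity) (by nlinarith)
    have e2 : c₀ ^ 2 * Real.pi / (α * Real.sqrt 2) ≤ c₀ ^ 2 * Real.pi / (α * Real.sqrt 2)
        * (1 + c₀ ^ 2 * Real.pi / 8 + c₀ * Real.sqrt (Real.pi * (1 - α)) / (2 * Real.sqrt 2)) :=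
      le_mul_of_one_le_right (by positivity)
        (by
          have := show (0:ℝ) ≤ c₀ ^ 2 * Real.pi / 8 by positivity
          have := show (0:ℝ) ≤ c₀ * Real.sqrt (Real.pi * (1 - α)) / (2 * Real.sqrt 2) by positivity
          linarith)
    have e3 : (0:ℝ) ≤ c₀ ^ 2 * Real.pi / 4 := by positivity
    have e4 : (0:ℝ) ≤ (c₀ ^ 2 * Real.pi / (2 * Real.sqrt 2 * α)) ^ 2 := by positivity
    linarith
end

section
/- Let c:ℝ→ℝ be differentiable with c(s)>0 for all s, let τ:ℝ→ℝ be continuous, and let m=(m₁,m₂,m₃), n=(n₁,n₂,n₃), b=(b₁,b₂,b₃):ℝ→ℝ³ solve the Serret–Frenet system with curvature c and torsion τ. Fix j∈{1,2,3} and let I be an interval containing 0 on which 1+m_j(s)>0. On I define η_j(s)=(n_j(s)+i·b_j(s))/(1+m_j(s)) and f_j(s)=exp((1/2)∫₀^s c(σ)η_j(σ)dσ). Then on I: f_j satisfies f_j''(s) + (iτ(s) − c'(s)/c(s))·f_j'(s) + (c(s)²/4)·f_j(s) = 0, with f_j(0)=1 and f_j'(0)=c(0)(n_j(0)+i·b_j(0))/(2(1+m_j(0)));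 moreover, for s∈I (where f_j(s)≠0), m_j(s) = 2·(1 + (4/c(s)²)·|f_j'(s)/f_j(s)|²)^{−1} − 1 and n_j(s)+i·b_j(s) = (4f_j'(s)/(c(s)f_j(s)))·(1 + (4/c(s)²)·|f_j'(s)/f_j(s)|²)^{−1}. -/
open Real Filter

private lemma riccati_alg' (cc tt mm nn bb : ℂ) (hfr : mm^2+nn^2+bb^2 = 1)
    (hP : 1 + mm ≠ 0) :
    -tt*Complex.I*((nn+bb*Complex.I)/(1+mm)) - cc/2*(1 + ((nn+bb*Complex.I)/(1+mm))^2)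
    = (((-cc*mm + tt*bb) + (-tt*nn)*Complex.I)*(1+mm) - (nn+bb*Complex.I)*(cc*nn))/((1+mm)^2) := by
  have hI : (Complex.I)^2 = -1 := Complex.I_sq
  have key : (-tt*Complex.I*(nn+bb*Complex.I))*(1+mm) - cc/2*((1+mm)^2 + (nn+bb*Complex.I)^2)
      = ((-cc*mm + tt*bb) + (-tt*nn)*Complex.I)*(1+mm) - (nn+bb*Complex.I)*(cc*nn) := by
    linear_combination (-(1+mm)*tt*bb - cc*bb^2/2) * hI + (cc/2) * hfr
  rw [← key]
  field_simp

open intervalIntegral Complex in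
/-- **Reduction to a second-order ODE.** For a Serret–Frenet
frame with positive curvature, the stereographic variable
`η_j = (n_j + i b_j)/(1+m_j)` and `f_j = exp(½∫₀ˢ c η_j)` satisfy a second
order linear ODE, with explicit initial data and inverse formulas for
`m_j, n_j, b_j` in terms of `f_j, f_j'`. -/
theorem serret_frenet_reduction (c c' τ : ℝ → ℝ)
    (hc : ∀ s : ℝ, HasDerivAt c (c' s) s) (hcpos : ∀ s : ℝ, 0 < c s)
    (hτ : Continuous τ)
    (m n b : ℝ → Fin 3 → ℝ) (hSF : SerretFrenet c τ m n b)
    (j : Fin 3)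
    (hframe : ∀ s : ℝ, (m s j) ^ 2 + (n s j) ^ 2 + (b s j) ^ 2 = 1)
    (I : Set ℝ) (hIopen : IsOpen I) (hIint : I.OrdConnected) (h0 : (0 : ℝ) ∈ I)
    (hmI : ∀ s ∈ I, (0 : ℝ) < 1 + m s j)
    (η : ℝ → ℂ)
    (hη : ∀ s : ℝ, η s = ((n s j : ℂ) + (b s j : ℂ) * Complex.I) / (1 + (m s j : ℂ)))
    (f : ℝ → ℂ)
    (hf : ∀ s : ℝ, f s = Complex.exp ((1 / 2) * ∫ σ in (0 : ℝ)..s, (c σ : ℂ) * η σ)) :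
    (∀ s ∈ I,
      deriv (deriv f) s
        + ((τ s : ℂ) * Complex.I - (c' s : ℂ) / (c s : ℂ)) * deriv f s
        + ((c s : ℂ) ^ 2 / 4) * f s = 0) ∧
    f 0 = 1 ∧
    deriv f 0 = (c 0 : ℂ) * ((n 0 j : ℂ) + (b 0 j : ℂ) * Complex.I)
      / (2 * (1 + (m 0 j : ℂ))) ∧
    (∀ s ∈ I,
      m s j = 2 * (1 + (4 / (c s) ^ 2) * ‖deriv f s / f s‖ ^ 2)⁻¹ - 1 ∧
      ((n s j : ℂ) + (b s j : ℂ) * Complex.I)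
        = (4 * deriv f s / ((c s : ℂ) * f s))
          * ((1 : ℂ) + (4 / (c s) ^ 2 : ℝ) * (‖deriv f s / f s‖ ^ 2 : ℝ))⁻¹) := by
  -- component derivatives
  have hmr : ∀ s, HasDerivAt (fun t => m t j) (c s * n s j) s := fun s => by
    simpa using hasDerivAt_pi.mp (hSF s).1 j
  have hnr : ∀ s, HasDerivAt (fun t => n t j) (-c s * m s j + τ s * b s j) s := fun s => by
    simpa using hasDerivAt_pi.mp (hSF s).2.1 j
  have hbr : ∀ s, HasDerivAt (fun t => b t j) (-τ s * n s j) s := fun s => by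
    simpa using hasDerivAt_pi.mp (hSF s).2.2 j
  have hPne : ∀ s ∈ I, (1 : ℂ) + (m s j : ℂ) ≠ 0 := by
    intro s hs
    have h1 : (1 : ℂ) + (m s j : ℂ) = ((1 + m s j : ℝ) : ℂ) := by push_cast; ring
    rw [h1]
    exact_mod_cast (hmI s hs).ne'
  have hηfun : η = fun s => ((n s j : ℂ) + (b s j : ℂ) * Complex.I) / (1 + (m s j : ℂ)) :=
    funext hη
  -- Riccati equation for η
  have hηd : ∀ s ∈ I, HasDerivAt η
      (-(τ s : ℂ) * Complex.I * η s - (c s : ℂ)/2 * (1 + η s ^ 2)) s := by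
    intro s hs
    have hU : HasDerivAt (fun t => ((n t j : ℂ) + (b t j : ℂ) * Complex.I))
        (((-c s * m s j + τ s * b s j : ℝ) : ℂ) + ((-τ s * n s j : ℝ) : ℂ) * Complex.I) s :=
      ((hnr s).ofReal_comp).add (((hbr s).ofReal_comp).mul_const _)
    have hP : HasDerivAt (fun t => (1 : ℂ) + (m t j : ℂ)) ((c s * n s j : ℝ) : ℂ) s :=
      ((hmr s).ofReal_comp).const_add 1
    have hd := hU.div hP (hPne s hs)
    rw [hηfun]
    refine hd.congr_deriv (Eq.symm ?_)
    push_cast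
    have hfr : ((m s j : ℝ) : ℂ)^2 + ((n s j : ℝ) : ℂ)^2 + ((b s j : ℝ) : ℂ)^2 = 1 := by
      exact_mod_cast congrArg (fun x : ℝ => (x : ℂ)) (hframe s)
    linear_combination riccati_alg' (c s) (τ s) ((m s j : ℝ) : ℂ) ((n s j : ℝ) : ℂ)
      ((b s j : ℝ) : ℂ) hfr (hPne s hs)
  -- continuity
  have hcm : Continuous fun s => m s j := continuous_iff_continuousAt.2 fun s => (hmr s).continuousAt
  have hcn : Continuous fun s => n s j := continuous_iff_continuousAt.2 fun s => (hnr s).continuousAt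
  have hcb : Continuous fun s => b s j := continuous_iff_continuousAt.2 fun s => (hbr s).continuousAt
  have hcc : Continuous c := continuous_iff_continuousAt.2 fun s => (hc s).continuousAt
  have hg : ∀ s ∈ I, ContinuousAt (fun σ => (c σ : ℂ) * η σ) s := by
    intro s hs
    rw [hηfun]
    apply ContinuousAt.mul
    · exact Complex.continuous_ofReal.continuousAt.comp hcc.continuousAt
    · apply ContinuousAt.div
      · fun_prop
      · fun_prop
      · exact hPne s hs
  -- derivative of f
  have hfd : ∀ s ∈ I, HasDerivAt f ((c s : ℂ)/2 * η s * f s) s := by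
    intro s hs
    have hGd : HasDerivAt (fun t => ∫ σ in (0:ℝ)..t, (c σ : ℂ) * η σ) ((c s : ℂ) * η s) s := by
      apply intervalIntegral.integral_hasDerivAt_right
      · apply ContinuousOn.intervalIntegrable
        intro x hx
        exact (hg x (hIint.uIcc_subset h0 hs hx)).continuousWithinAt
      · exact ContinuousAt.stronglyMeasurableAtFilter hIopen hg s hs
      · exact hg s hs
    have h1 := (hGd.const_mul ((1:ℂ)/2)).cexp
    have hfeq : f = fun t => Complex.exp ((1/2 : ℂ) * ∫ σ in (0:ℝ)..t, (c σ : ℂ) * η σ) :=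
      funext hf
    rw [← hfeq] at h1
    rw [← hf s] at h1
    convert h1 using 1
    ring
  have hd1 : ∀ s ∈ I, deriv f s = (c s : ℂ)/2 * η s * f s := fun s hs => (hfd s hs).deriv
  have hf0 : f 0 = 1 := by rw [hf 0, intervalIntegral.integral_same]; simp
  refine ⟨?_, hf0, ?_, ?_⟩
  · -- the second order ODE
    intro s hs
    have hcne : (c s : ℂ) ≠ 0 := Complex.ofReal_ne_zero.mpr (hcpos s).ne'
    have hFd : HasDerivAt (fun t => (c t : ℂ)/2 * η t * f t)
        ((c' s : ℂ)/2 * η s * f s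
          + (c s : ℂ)/2 * (-(τ s : ℂ) * Complex.I * η s - (c s : ℂ)/2 * (1 + η s ^ 2)) * f s
          + (c s : ℂ)/2 * η s * ((c s : ℂ)/2 * η s * f s)) s := by
      have h1 : HasDerivAt (fun t => (c t : ℂ)/2) ((c' s : ℂ)/2) s :=
        ((hc s).ofReal_comp).div_const 2
      have h2 := (h1.mul (hηd s hs)).mul (hfd s hs)
      refine h2.congr_deriv (Eq.symm ?_)
      simp only [Pi.mul_apply]
      ring
    have hff : deriv f =ᶠ[nhds s] fun t => (c t : ℂ)/2 * η t * f t := by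
      filter_upwards [hIopen.mem_nhds hs] with t ht using hd1 t ht
    rw [hff.deriv_eq, hFd.deriv, hd1 s hs]
    field_simp
    ring
  · -- initial derivative
    rw [hd1 0 h0, hf0, hη 0, mul_one, div_mul_div_comm]
  · -- inverse formulas
    intro s hs
    have hfne : f s ≠ 0 := by rw [hf s]; exact Complex.exp_ne_zero _
    have hcne : c s ≠ 0 := (hcpos s).ne'
    have hpne : 1 + m s j ≠ 0 := (hmI s hs).ne'
    have habs : ‖deriv f s / f s‖ ^ 2
        = (c s / 2)^2 * ((n s j ^ 2 + b s j ^ 2)/(1 + m s j)^2) := by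
      rw [hd1 s hs, mul_div_cancel_right₀ _ hfne, hη s,
        show ((c s : ℂ)/2) = ((c s / 2 : ℝ) : ℂ) by push_cast; ring,
        show ((1:ℂ) + (m s j : ℂ)) = ((1 + m s j : ℝ) : ℂ) by push_cast; ring,
        Complex.sq_norm, Complex.normSq_mul, Complex.normSq_div,
        Complex.normSq_ofReal, Complex.normSq_ofReal, Complex.normSq_add_mul_I]
      ring
    have key : (4 / (c s)^2) * ((c s / 2)^2 * ((n s j ^ 2 + b s j ^ 2)/(1 + m s j)^2))
        = (1 - m s j)/(1 + m s j) := by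
      rw [show n s j ^ 2 + b s j ^ 2 = 1 - m s j ^ 2 by linarith [hframe s]]
      field_simp
      ring
    constructor
    · rw [habs, key,
        show (1:ℝ) + (1 - m s j)/(1 + m s j) = 2/(1 + m s j) by field_simp; ring_nf,
        inv_div]
      ring
    · rw [habs, ← Complex.ofReal_mul, key, hd1 s hs, hη s,
        show ((1:ℂ) + ((1 - m s j)/(1 + m s j) : ℝ)) = 2/(1 + (m s j : ℂ)) by
          push_cast; field_simp [hPne s hs]; ring,
        inv_div]
      have hcneC : (c s : ℂ) ≠ 0 := Complex.ofReal_ne_zero.mpr hcne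
      field_simp [hPne s hs, hcneC, hfne]
      ring
end
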